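/- arXiv:2009.04906 — 2 statements merged into one kernel-verified Lean document; each statement's English description precedes it below -/
import Mathlib

section
/- Let d ≥ 1, 0 < μ ≤ L, and let A be a real symmetric d×d matrix with μ‖v‖² ≤ vᵀAv ≤ L‖v‖² for all v ∈ ℝ^d. Let x, x* ∈ ℝ^d, τ > 0, Δ ≥ 0, σ ≥ 0, and δ : ℝ^d → ℝ measurable with |δ(x)| ≤ Δ for all x. Let e be uniformly distributed on the unit Euclidean sphere S^{d−1}, and ξ⁺, ξ⁻ real random variables independent of e with E[ξ⁺] = E[ξ⁻] = 0, E[(ξ⁺)²] ≤ σ², E[(ξ⁻)²] ≤ σ². Define g = d·⟨A(x−x*), e⟩·e + (d/(2τ))·((ξ⁺ + δ(x+τe))·‖x+τe−x*‖ − (ξ⁻ + δ(x−τe))·‖x−τe−x*‖)·e. Then for every step size 0 < γ ≤ 1/(5dL), E[‖x − γg − x*‖²] ≤ (1 − γμ + 5d²γ²(Δ² + σ²)/τ² + 2dγΔ/τ)·‖x−x*‖² + 2dγΔ·‖x−x*‖ + 5d²γ²(Δ² + σ²). -/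
open MeasureTheory ProbabilityTheory

set_option maxHeartbeats 1000000



lemma coord_abs_le_norm {d : ℕ} (y : EuclideanSpace ℝ (Fin d)) (i : Fin d) : |y i| ≤ ‖y‖ := by
  have := EuclideanSpace.norm_eq y
  have h : |y i| = Real.sqrt ((y i)^2) := by rw [Real.sqrt_sq_eq_abs]
  rw [h, this]
  apply Real.sqrt_le_sqrt
  have : (y i)^2 = ‖y i‖^2 := by simp [Real.norm_eq_abs, sq_abs]
  rw [this]
  exact Finset.single_le_sum (f := fun j => ‖y j‖^2) (fun j _ => by positivity) (Finset.mem_univ i)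

lemma sphere_isotropy {d : ℕ} (hd : 1 ≤ d)
    (ν : Measure (EuclideanSpace ℝ (Fin d))) [IsProbabilityMeasure ν]
    (hs : ν (Metric.sphere (0 : EuclideanSpace ℝ (Fin d)) 1)ᶜ = 0)
    (hinv : ∀ T : EuclideanSpace ℝ (Fin d) ≃ₗᵢ[ℝ] EuclideanSpace ℝ (Fin d), ν.map T = ν)
    (a b : EuclideanSpace ℝ (Fin d)) :
    ∫ y, (inner ℝ a y : ℝ) * (inner ℝ b y : ℝ) ∂ν = (inner ℝ a b : ℝ) / d := by
  have hdR : (0:ℝ) < (d:ℝ) := by exact_mod_cast Nat.lt_of_lt_of_le Nat.zero_lt_one hd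
  have haeu : ∀ᵐ y ∂ν, ‖y‖ = 1 := by
    rw [ae_iff]
    convert hs using 2
    ext y
    simp [Metric.mem_sphere, dist_zero_right]
  -- coordinate functions measurable
  have hcm : ∀ i : Fin d, Measurable fun y : EuclideanSpace ℝ (Fin d) => y i := fun i =>
    (EuclideanSpace.proj i).continuous.measurable
  have hint : ∀ i j : Fin d, Integrable (fun y : EuclideanSpace ℝ (Fin d) => y i * y j) ν := by
    intro i j
    refine Integrable.mono' (integrable_const 1) ((hcm i).mul (hcm j)).aestronglyMeasurable ?_
    filter_upwards [haeu] with y hy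
    have h1 : |y i| ≤ 1 := hy ▸ coord_abs_le_norm y i
    have h2 : |y j| ≤ 1 := hy ▸ coord_abs_le_norm y j
    rw [Real.norm_eq_abs, abs_mul]
    nlinarith [abs_nonneg (y i), abs_nonneg (y j)]
  set m : Fin d → Fin d → ℝ := fun i j => ∫ y, y i * y j ∂ν with hm
  -- off-diagonal vanishes
  have hflip : ∀ i j : Fin d, i ≠ j → m i j = 0 := by
    intro i j hij
    classical
    set T : EuclideanSpace ℝ (Fin d) ≃ₗᵢ[ℝ] EuclideanSpace ℝ (Fin d) :=
      LinearIsometryEquiv.piLpCongrRight 2 (fun k =>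
        if k = i then LinearIsometryEquiv.neg ℝ else LinearIsometryEquiv.refl ℝ ℝ) with hT
    have hTapp : ∀ (y : EuclideanSpace ℝ (Fin d)) (k : Fin d),
        T y k = if k = i then -(y k) else y k := by
      intro y k
      rw [hT, LinearIsometryEquiv.piLpCongrRight_apply]
      by_cases h : k = i
      · subst h; simp
      · simp [h]
    have step : m i j = ∫ y, (T y) i * (T y) j ∂ν := by
      have h1 : m i j = ∫ y, y i * y j ∂(ν.map T) := by rw [hinv T]
      rw [h1, integral_map T.continuous.measurable.aemeasurable
        (f := fun y : EuclideanSpace ℝ (Fin d) => y i * y j) (((hcm i).mul (hcm j)).aestronglyMeasurable)]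
    have hkey : ∀ y : EuclideanSpace ℝ (Fin d), (T y) i * (T y) j = -(y i * y j) := by
      intro y
      rw [hTapp, hTapp, if_pos rfl, if_neg hij.symm]
      ring
    have h2 : (∫ y, (T y) i * (T y) j ∂ν) = - m i j := by
      rw [integral_congr_ae (Filter.Eventually.of_forall hkey), integral_neg]
    have := step.trans h2
    linarith
  -- diagonal entries equal
  have hdiag : ∀ i j : Fin d, m i i = m j j := by
    intro i j
    classical
    set T : EuclideanSpace ℝ (Fin d) ≃ₗᵢ[ℝ] EuclideanSpace ℝ (Fin d) :=
      LinearIsometryEquiv.piLpCongrLeft 2 ℝ ℝ (Equiv.swap i j) with hT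
    have hTapp : ∀ (y : EuclideanSpace ℝ (Fin d)), T y i = y j := by
      intro y
      rw [hT, LinearIsometryEquiv.piLpCongrLeft_apply]
      simp only [Equiv.piCongrLeft'_apply, Equiv.symm_swap]
      rw [Equiv.swap_apply_left]
    have step : m i i = ∫ y, (T y) i * (T y) i ∂ν := by
      have h1 : m i i = ∫ y, y i * y i ∂(ν.map T) := by rw [hinv T]
      rw [h1, integral_map T.continuous.measurable.aemeasurable
        (f := fun y : EuclideanSpace ℝ (Fin d) => y i * y i) (((hcm i).mul (hcm i)).aestronglyMeasurable)]
    rw [step]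
    exact integral_congr_ae (Filter.Eventually.of_forall fun y => by simp only []; rw [hTapp y])
  -- sum of diagonal = 1
  have hsum : ∑ i : Fin d, m i i = 1 := by
    rw [hm]
    rw [← integral_finset_sum _ (fun i _ => hint i i)]
    have : ∫ (y : EuclideanSpace ℝ (Fin d)), (∑ i, y i * y i) ∂ν = ∫ (y : EuclideanSpace ℝ (Fin d)), (1:ℝ) ∂ν := by
      refine integral_congr_ae ?_
      filter_upwards [haeu] with y hy
      have h1 : (inner ℝ y y : ℝ) = ∑ i, y i * y i := by
        rw [PiLp.inner_apply]; simp [RCLike.inner_apply, sq]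
      have h2 : (inner ℝ y y : ℝ) = ‖y‖^2 := real_inner_self_eq_norm_sq y
      rw [← h1, h2, hy]; norm_num
    rw [this]
    simp
  -- each diagonal entry is 1/d
  have hdval : ∀ i : Fin d, m i i = 1 / d := by
    intro i
    have h1 : ∑ j : Fin d, m j j = (d:ℝ) * m i i := by
      rw [Finset.sum_congr rfl (fun j _ => hdiag j i)]
      simp [Finset.sum_const, Finset.card_univ, mul_comm]
    rw [hsum] at h1
    field_simp
    linarith
  -- expand the integrand
  have expand : ∀ y : EuclideanSpace ℝ (Fin d), (inner ℝ a y : ℝ) * (inner ℝ b y : ℝ)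
      = ∑ i : Fin d, ∑ j : Fin d, (a i * b j) * (y i * y j) := by
    intro y
    rw [PiLp.inner_apply, PiLp.inner_apply, Finset.sum_mul_sum]
    refine Finset.sum_congr rfl fun i _ => Finset.sum_congr rfl fun j _ => ?_
    simp [RCLike.inner_apply]; ring
  calc ∫ y, (inner ℝ a y : ℝ) * (inner ℝ b y : ℝ) ∂ν
      = ∫ y, ∑ i : Fin d, ∑ j : Fin d, (a i * b j) * (y i * y j) ∂ν := by
        exact integral_congr_ae (Filter.Eventually.of_forall expand)
    _ = ∑ i : Fin d, ∑ j : Fin d, (a i * b j) * m i j := by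
        rw [integral_finset_sum _ (fun i _ => integrable_finset_sum _
          (fun j _ => (hint i j).const_mul _))]
        refine Finset.sum_congr rfl fun i _ => ?_
        rw [integral_finset_sum _ (fun j _ => (hint i j).const_mul _)]
        exact Finset.sum_congr rfl fun j _ => integral_const_mul _ _
    _ = ∑ i : Fin d, (a i * b i) * (1 / d) := by
        refine Finset.sum_congr rfl fun i _ => ?_
        rw [Finset.sum_eq_single i]
        · rw [hdval i]
        · intro j _ hji
          rw [hflip i j (Ne.symm hji), mul_zero]
        · exact fun h => absurd (Finset.mem_univ i) h
    _ = (inner ℝ a b : ℝ) / d := by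
        rw [PiLp.inner_apply]
        simp only [RCLike.inner_apply, conj_trivial]
        rw [Finset.sum_div]
        exact Finset.sum_congr rfl fun i _ => by ring


lemma sq_norm_A_le {d : ℕ} {μ L : ℝ} (hμ : 0 < μ) (hμL : μ ≤ L)
    (A : Matrix (Fin d) (Fin d) ℝ) (hAsymm : A.IsSymm)
    (hAlow : ∀ v : EuclideanSpace ℝ (Fin d),
      μ * ‖v‖ ^ 2 ≤ (inner ℝ (Matrix.toEuclideanLin A v) v : ℝ))
    (hAupp : ∀ v : EuclideanSpace ℝ (Fin d),
      (inner ℝ (Matrix.toEuclideanLin A v) v : ℝ) ≤ L * ‖v‖ ^ 2)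
    (v : EuclideanSpace ℝ (Fin d)) :
    ‖Matrix.toEuclideanLin A v‖ ^ 2 ≤ L * (inner ℝ (Matrix.toEuclideanLin A v) v : ℝ) := by
  set T := Matrix.toEuclideanLin A with hTdef
  have hherm : A.IsHermitian := by
    rwa [Matrix.IsHermitian, Matrix.conjTranspose_eq_transpose_of_trivial]
  have hsym : LinearMap.IsSymmetric T := Matrix.isHermitian_iff_isSymmetric.mp hherm
  have hq : ∀ u : EuclideanSpace ℝ (Fin d), 0 ≤ (inner ℝ (T u) u : ℝ) :=
    fun u => le_trans (by positivity) (hAlow u)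
  -- Cauchy-Schwarz for the PSD form (u,w) ↦ ⟪T u, w⟫
  have hCS : ∀ u w : EuclideanSpace ℝ (Fin d),
      (inner ℝ (T u) w : ℝ) ^ 2 ≤ (inner ℝ (T u) u : ℝ) * (inner ℝ (T w) w : ℝ) := by
    intro u w
    have hpoly : ∀ t : ℝ, 0 ≤ (inner ℝ (T w) w : ℝ) * (t * t)
        + (2 * (inner ℝ (T u) w : ℝ)) * t + (inner ℝ (T u) u : ℝ) := by
      intro t
      have h0 : (0:ℝ) ≤ (inner ℝ (T (u + t • w)) (u + t • w) : ℝ) := hq _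
      have hwu : (inner ℝ (T w) u : ℝ) = (inner ℝ (T u) w : ℝ) := by
        rw [hsym w u, real_inner_comm]
      have hexp : (inner ℝ (T (u + t • w)) (u + t • w) : ℝ)
          = (inner ℝ (T w) w : ℝ) * (t * t) + (2 * (inner ℝ (T u) w : ℝ)) * t
            + (inner ℝ (T u) u : ℝ) := by
        rw [map_add, LinearMap.map_smul]
        simp only [inner_add_left, inner_add_right, real_inner_smul_left,
          real_inner_smul_right, hwu]
        ring
      linarith [hexp ▸ h0]
    have := discrim_le_zero hpoly
    rw [discrim] at this
    nlinarith [this]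
  have hfin := hCS v (T v)
  have h1 : (inner ℝ (T v) (T v) : ℝ) = ‖T v‖ ^ 2 := real_inner_self_eq_norm_sq _
  have h2 : (inner ℝ (T (T v)) (T v) : ℝ) ≤ L * ‖T v‖ ^ 2 := hAupp (T v)
  by_cases hz : ‖T v‖ = 0
  · rw [hz]
    nlinarith [hq v, lt_of_lt_of_le hμ hμL]
  · have hpos : (0:ℝ) < ‖T v‖ ^ 2 := by positivity
    nlinarith [hq v, hq (T v)]


lemma young5 (X Y : ℝ) : (X + Y)^2 ≤ 5*X^2 + (5/4)*Y^2 := by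
  nlinarith [sq_nonneg (2*X - Y/2)]

lemma sq_add_le2 (X Y : ℝ) : (X + Y)^2 ≤ 2*X^2 + 2*Y^2 := by
  nlinarith [sq_nonneg (X - Y)]

lemma sq_sub_le2 (X Y : ℝ) : (X - Y)^2 ≤ 2*X^2 + 2*Y^2 := by
  nlinarith [sq_nonneg (X + Y)]

lemma sq_mul_le (u P K : ℝ) (hP0 : 0 ≤ P) (hPK : P ≤ K) : (u * P)^2 ≤ u^2 * K^2 := by
  have h : P^2 ≤ K^2 := by nlinarith
  calc (u * P)^2 = u^2 * P^2 := by ring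
    _ ≤ u^2 * K^2 := mul_le_mul_of_nonneg_left h (sq_nonneg u)

lemma scalar_key (D τ γ Δ V a b u w Dp Dm P1 M1 : ℝ)
    (hτ : 0 < τ) (hΔ : 0 ≤ Δ) (hγ0 : 0 < γ) (hD1 : 1 ≤ D)
    (hV0 : 0 ≤ V) (hb : |b| ≤ V)
    (hP10 : 0 ≤ P1) (hP1 : P1 ≤ V + τ) (hM10 : 0 ≤ M1) (hM1 : M1 ≤ V + τ)
    (hDp : |Dp| ≤ Δ) (hDm : |Dm| ≤ Δ) :
    V^2 - 2*(γ * (D * a + (D/(2*τ)) * ((u + Dp) * P1 - (w + Dm) * M1)) * b)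
      + (γ * (D * a + (D/(2*τ)) * ((u + Dp) * P1 - (w + Dm) * M1)))^2
    ≤ (V^2 + 2*γ*(D/τ)*Δ*(V+τ)*V + (5/2)*γ^2*(D^2/τ^2)*Δ^2*(V+τ)^2)
      + (-(2*γ*D)) * (a*b) + (-(γ*(D/τ))) * (u*(P1*b)) + (γ*(D/τ)) * (w*(M1*b))
      + (5*γ^2*D^2) * (a*a) + ((5/4)*γ^2*(D^2/τ^2)*(V+τ)^2) * u^2
      + ((5/4)*γ^2*(D^2/τ^2)*(V+τ)^2) * w^2 := by
  have hτ' : τ ≠ 0 := ne_of_gt hτ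
  -- linear part identity
  have hlin : -(2*(γ * (D * a + (D/(2*τ)) * ((u + Dp) * P1 - (w + Dm) * M1)) * b))
      = (-(2*γ*D)) * (a*b) + (-(γ*(D/τ))) * (u*(P1*b)) + (γ*(D/τ)) * (w*(M1*b))
        - γ * (D/τ) * ((Dp * P1 - Dm * M1) * b) := by
    field_simp
    ring
  -- quadratic part
  have hquad : (γ * (D * a + (D/(2*τ)) * ((u + Dp) * P1 - (w + Dm) * M1))) ^ 2
      ≤ (5*γ^2*D^2) * (a*a) + (5/16) * γ^2 * (D^2/τ^2)
          * ((u + Dp) * P1 - (w + Dm) * M1) ^ 2 := by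
    have h1 := young5 (D * a) ((D/(2*τ)) * ((u + Dp) * P1 - (w + Dm) * M1))
    have h2 := mul_le_mul_of_nonneg_left h1 (sq_nonneg γ)
    calc (γ * (D * a + (D/(2*τ)) * ((u + Dp) * P1 - (w + Dm) * M1))) ^ 2
        = γ^2 * ((D * a + (D/(2*τ)) * ((u + Dp) * P1 - (w + Dm) * M1)) ^ 2) := by ring
      _ ≤ γ^2 * (5 * (D * a) ^ 2
            + (5/4) * ((D/(2*τ)) * ((u + Dp) * P1 - (w + Dm) * M1)) ^ 2) := h2
      _ = (5*γ^2*D^2) * (a*a) + (5/16) * γ^2 * (D^2/τ^2)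
            * ((u + Dp) * P1 - (w + Dm) * M1) ^ 2 := by
          field_simp
          ring
  -- N² bound
  have hu2 : (u * P1) ^ 2 ≤ u ^ 2 * (V + τ) ^ 2 := sq_mul_le u P1 (V+τ) hP10 hP1
  have hw2 : (w * M1) ^ 2 ≤ w ^ 2 * (V + τ) ^ 2 := sq_mul_le w M1 (V+τ) hM10 hM1
  have hDpP : |Dp * P1| ≤ Δ * (V + τ) := by
    rw [abs_mul, abs_of_nonneg hP10]
    exact mul_le_mul hDp hP1 hP10 hΔ
  have hDmM : |Dm * M1| ≤ Δ * (V + τ) := by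
    rw [abs_mul, abs_of_nonneg hM10]
    exact mul_le_mul hDm hM1 hM10 hΔ
  have hDabs : |Dp * P1 - Dm * M1| ≤ 2 * Δ * (V + τ) := by
    refine le_trans (abs_sub _ _) ?_
    linarith
  have hD2 : (Dp * P1 - Dm * M1) ^ 2 ≤ 4 * Δ ^ 2 * (V + τ) ^ 2 := by
    have h := abs_le.mp hDabs
    nlinarith [h.1, h.2]
  have hN2 : ((u + Dp) * P1 - (w + Dm) * M1) ^ 2
      ≤ (4 * u ^ 2 + 4 * w ^ 2 + 8 * Δ ^ 2) * (V + τ) ^ 2 := by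
    have hs1 : (u + Dp) * P1 - (w + Dm) * M1
        = (u * P1 - w * M1) + (Dp * P1 - Dm * M1) := by ring
    rw [hs1]
    have h3 := sq_add_le2 (u * P1 - w * M1) (Dp * P1 - Dm * M1)
    have h4 := sq_sub_le2 (u * P1) (w * M1)
    linarith [h3, h4, hu2, hw2, hD2]
  have hN2s : (5/16) * γ^2 * (D^2/τ^2) * ((u + Dp) * P1 - (w + Dm) * M1) ^ 2
      ≤ (5/16) * γ^2 * (D^2/τ^2) * ((4 * u ^ 2 + 4 * w ^ 2 + 8 * Δ ^ 2) * (V + τ) ^ 2) :=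
    mul_le_mul_of_nonneg_left hN2 (by positivity)
  -- cross term bound
  have hXb : |(Dp * P1 - Dm * M1) * b| ≤ 2 * Δ * (V + τ) * V := by
    rw [abs_mul]
    calc |Dp * P1 - Dm * M1| * |b| ≤ (2 * Δ * (V + τ)) * V :=
          mul_le_mul hDabs hb (abs_nonneg _) (mul_nonneg (by linarith) (by linarith))
      _ = 2 * Δ * (V + τ) * V := by ring
  have hcross : -(γ * (D/τ) * ((Dp * P1 - Dm * M1) * b))
      ≤ 2 * γ * (D/τ) * Δ * (V + τ) * V := by
    have h1' : -((Dp * P1 - Dm * M1) * b) ≤ 2 * Δ * (V + τ) * V :=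
      le_trans (neg_le_abs _) hXb
    have hc0 : (0:ℝ) ≤ γ * (D/τ) := mul_nonneg hγ0.le (div_nonneg (by linarith) hτ.le)
    calc -(γ * (D/τ) * ((Dp * P1 - Dm * M1) * b))
        = γ * (D/τ) * (-((Dp * P1 - Dm * M1) * b)) := by ring
      _ ≤ γ * (D/τ) * (2 * Δ * (V + τ) * V) := mul_le_mul_of_nonneg_left h1' hc0
      _ = 2 * γ * (D/τ) * Δ * (V + τ) * V := by ring
  linarith [hlin, hquad, hcross, hN2s]



/-- one-step descent estimate, Theorem 3: for the zeroth-order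
gradient estimator `g` of the quadratic `½(x-x*)ᵀA(x-x*)` with `μI ⪯ A ⪯ LI`,
noises of mean zero and second moment at most `σ²`, `|δ| ≤ Δ`, and any step
size `0 < γ ≤ 1/(5dL)`,
`E‖x - γg - x*‖² ≤ (1 - γμ + 5d²γ²(Δ²+σ²)/τ² + 2dγΔ/τ)‖x-x*‖²
  + 2dγΔ‖x-x*‖ + 5d²γ²(Δ²+σ²)`. -/
theorem zoGD_one_step (d : ℕ) (hd : 1 ≤ d) (μ L : ℝ) (hμ : 0 < μ) (hμL : μ ≤ L)
    (A : Matrix (Fin d) (Fin d) ℝ) (hAsymm : A.IsSymm)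
    (hAlow : ∀ v : EuclideanSpace ℝ (Fin d),
      μ * ‖v‖ ^ 2 ≤ (inner ℝ (Matrix.toEuclideanLin A v) v : ℝ))
    (hAupp : ∀ v : EuclideanSpace ℝ (Fin d),
      (inner ℝ (Matrix.toEuclideanLin A v) v : ℝ) ≤ L * ‖v‖ ^ 2)
    (x xstar : EuclideanSpace ℝ (Fin d))
    (τ Δ σ : ℝ) (hτ : 0 < τ) (hΔ : 0 ≤ Δ) (hσ : 0 ≤ σ)
    (δ : EuclideanSpace ℝ (Fin d) → ℝ) (hδmeas : Measurable δ)
    (hδbound : ∀ y, |δ y| ≤ Δ)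
    (Ω : Type*) [MeasurableSpace Ω] (P : Measure Ω) [IsProbabilityMeasure P]
    (e : Ω → EuclideanSpace ℝ (Fin d)) (he : Measurable e)
    (hesphere : (P.map e) (Metric.sphere (0 : EuclideanSpace ℝ (Fin d)) 1)ᶜ = 0)
    (heinv : ∀ T : EuclideanSpace ℝ (Fin d) ≃ₗᵢ[ℝ] EuclideanSpace ℝ (Fin d),
      (P.map e).map T = P.map e)
    (ξp ξm : Ω → ℝ) (hξpmeas : Measurable ξp) (hξmmeas : Measurable ξm)
    (hξpL2 : MemLp ξp 2 P) (hξmL2 : MemLp ξm 2 P)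
    (hξpmean : ∫ ω, ξp ω ∂P = 0) (hξmmean : ∫ ω, ξm ω ∂P = 0)
    (hξpvar : ∫ ω, (ξp ω) ^ 2 ∂P ≤ σ ^ 2) (hξmvar : ∫ ω, (ξm ω) ^ 2 ∂P ≤ σ ^ 2)
    (hindp : IndepFun ξp e P) (hindm : IndepFun ξm e P)
    (g : Ω → EuclideanSpace ℝ (Fin d))
    (hg : ∀ ω, g ω =
      (d : ℝ) • (inner ℝ (Matrix.toEuclideanLin A (x - xstar)) (e ω) : ℝ) • e ω
      + ((d : ℝ) / (2 * τ)) •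
        ((ξp ω + δ (x + τ • e ω)) * ‖x + τ • e ω - xstar‖
          - (ξm ω + δ (x - τ • e ω)) * ‖x - τ • e ω - xstar‖) • e ω)
    (γ : ℝ) (hγ0 : 0 < γ) (hγ : γ ≤ 1 / (5 * d * L)) :
    ∫ ω, ‖x - γ • g ω - xstar‖ ^ 2 ∂P ≤
      (1 - γ * μ + 5 * d ^ 2 * γ ^ 2 * (Δ ^ 2 + σ ^ 2) / τ ^ 2
          + 2 * d * γ * Δ / τ) * ‖x - xstar‖ ^ 2
        + 2 * d * γ * Δ * ‖x - xstar‖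
        + 5 * d ^ 2 * γ ^ 2 * (Δ ^ 2 + σ ^ 2) := by
  classical
  have hdR : (1:ℝ) ≤ (d:ℝ) := by exact_mod_cast hd
  have hdpos : (0:ℝ) < (d:ℝ) := lt_of_lt_of_le one_pos hdR
  have hdne : (d:ℝ) ≠ 0 := ne_of_gt hdpos
  have hτne : τ ≠ 0 := ne_of_gt hτ
  have hL : (0:ℝ) < L := lt_of_lt_of_le hμ hμL
  set v : EuclideanSpace ℝ (Fin d) := x - xstar with hv
  obtain ⟨Av, hAv⟩ : ∃ z : EuclideanSpace ℝ (Fin d), z = Matrix.toEuclideanLin A v :=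
    ⟨_, rfl⟩
  rw [← hAv] at hg
  have hQμ : μ * ‖v‖ ^ 2 ≤ (inner ℝ Av v : ℝ) := by rw [hAv]; exact hAlow v
  have hQ0 : (0:ℝ) ≤ (inner ℝ Av v : ℝ) := le_trans (by positivity) hQμ
  have hWQ : ‖Av‖ ^ 2 ≤ L * (inner ℝ Av v : ℝ) := by
    rw [hAv]; exact sq_norm_A_le hμ hμL A hAsymm hAlow hAupp v
  have hγdL : γ * (5 * (d:ℝ) * L) ≤ 1 := by
    rw [← le_div_iff₀ (by positivity)]
    exact hγ
  -- a.e. the direction lies on the unit sphere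
  have hsph : ∀ᵐ ω ∂P, ‖e ω‖ = 1 := by
    have h0 : P (e ⁻¹' (Metric.sphere (0 : EuclideanSpace ℝ (Fin d)) 1)ᶜ) = 0 := by
      rw [← Measure.map_apply he Metric.isClosed_sphere.measurableSet.compl]
      exact hesphere
    rw [ae_iff]
    convert h0 using 2
    ext ω
    simp [Metric.mem_sphere, dist_zero_right]
  -- constants
  obtain ⟨C0, hC0⟩ : ∃ c : ℝ, c = ‖v‖^2 + 2*γ*((d:ℝ)/τ)*Δ*(‖v‖+τ)*‖v‖
      + (5/2)*γ^2*((d:ℝ)^2/τ^2)*Δ^2*(‖v‖+τ)^2 := ⟨_, rfl⟩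
  obtain ⟨C1, hC1⟩ : ∃ c : ℝ, c = -(2*γ*(d:ℝ)) := ⟨_, rfl⟩
  obtain ⟨C2, hC2⟩ : ∃ c : ℝ, c = -(γ*((d:ℝ)/τ)) := ⟨_, rfl⟩
  obtain ⟨C3, hC3⟩ : ∃ c : ℝ, c = γ*((d:ℝ)/τ) := ⟨_, rfl⟩
  obtain ⟨C4, hC4⟩ : ∃ c : ℝ, c = 5*γ^2*(d:ℝ)^2 := ⟨_, rfl⟩
  obtain ⟨C5, hC5⟩ : ∃ c : ℝ, c = (5/4)*γ^2*((d:ℝ)^2/τ^2)*(‖v‖+τ)^2 := ⟨_, rfl⟩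
  have hC5nn : (0:ℝ) ≤ C5 := by rw [hC5]; positivity
  -- dominating integrand
  set F : Ω → ℝ := fun ω =>
    C0 + C1 * ((inner ℝ Av (e ω) : ℝ) * (inner ℝ v (e ω) : ℝ))
       + C2 * (ξp ω * (‖v + τ • e ω‖ * (inner ℝ v (e ω) : ℝ)))
       + C3 * (ξm ω * (‖v - τ • e ω‖ * (inner ℝ v (e ω) : ℝ)))
       + C4 * ((inner ℝ Av (e ω) : ℝ) * (inner ℝ Av (e ω) : ℝ))
       + C5 * (ξp ω) ^ 2 + C5 * (ξm ω) ^ 2 with hF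
  -- pointwise bound
  have hP1le : ∀ ω : Ω, ‖e ω‖ = 1 → ‖v + τ • e ω‖ ≤ ‖v‖ + τ := by
    intro ω hne
    refine le_trans (norm_add_le _ _) ?_
    rw [norm_smul, Real.norm_eq_abs, abs_of_pos hτ, hne, mul_one]
  have hM1le : ∀ ω : Ω, ‖e ω‖ = 1 → ‖v - τ • e ω‖ ≤ ‖v‖ + τ := by
    intro ω hne
    refine le_trans (norm_sub_le _ _) ?_
    rw [norm_smul, Real.norm_eq_abs, abs_of_pos hτ, hne, mul_one]
  have hbabs : ∀ ω : Ω, ‖e ω‖ = 1 → |(inner ℝ v (e ω) : ℝ)| ≤ ‖v‖ := by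
    intro ω hne
    have := abs_real_inner_le_norm v (e ω)
    rwa [hne, mul_one] at this
  have haabs : ∀ ω : Ω, ‖e ω‖ = 1 → |(inner ℝ Av (e ω) : ℝ)| ≤ ‖Av‖ := by
    intro ω hne
    have := abs_real_inner_le_norm Av (e ω)
    rwa [hne, mul_one] at this
  have key : ∀ ω : Ω, ‖e ω‖ = 1 → ‖x - γ • g ω - xstar‖ ^ 2 ≤ F ω := by
    intro ω hne
    have hgω : g ω = ((d:ℝ) * (inner ℝ Av (e ω) : ℝ)
        + ((d:ℝ) / (2*τ)) * ((ξp ω + δ (x + τ • e ω)) * ‖v + τ • e ω‖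
          - (ξm ω + δ (x - τ • e ω)) * ‖v - τ • e ω‖)) • e ω := by
      rw [hg ω, smul_smul, smul_smul, ← add_smul,
        add_sub_right_comm x (τ • e ω) xstar, sub_right_comm x (τ • e ω) xstar, ← hv]
    have hx2 : x - γ • g ω - xstar = v - γ • g ω := by rw [sub_right_comm, ← hv]
    rw [hx2, hgω, smul_smul, norm_sub_sq_real, real_inner_smul_right, norm_smul,
      Real.norm_eq_abs, hne, mul_one, sq_abs]
    have hkey := scalar_key (d:ℝ) τ γ Δ ‖v‖ (inner ℝ Av (e ω)) (inner ℝ v (e ω))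
      (ξp ω) (ξm ω) (δ (x + τ • e ω)) (δ (x - τ • e ω)) ‖v + τ • e ω‖ ‖v - τ • e ω‖
      hτ hΔ hγ0 hdR (norm_nonneg v) (hbabs ω hne) (norm_nonneg _) (hP1le ω hne)
      (norm_nonneg _) (hM1le ω hne) (hδbound _) (hδbound _)
    rw [hF]
    simp only
    rw [hC0, hC1, hC2, hC3, hC4, hC5]
    refine le_trans (le_of_eq ?_) (le_trans hkey (le_of_eq ?_)) <;> ring
  -- measurability
  have hinAm : Measurable fun ω => (inner ℝ Av (e ω) : ℝ) := measurable_const.inner he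
  have hinvm : Measurable fun ω => (inner ℝ v (e ω) : ℝ) := measurable_const.inner he
  have hnpm : Measurable fun ω => ‖v + τ • e ω‖ := (measurable_const.add (he.const_smul τ)).norm
  have hnmm : Measurable fun ω => ‖v - τ • e ω‖ := (measurable_const.sub (he.const_smul τ)).norm
  have hξpint : Integrable ξp P := hξpL2.integrable one_le_two
  have hξmint : Integrable ξm P := hξmL2.integrable one_le_two
  -- integrability of the pieces
  have hX1int : Integrable (fun ω => (inner ℝ Av (e ω) : ℝ) * (inner ℝ v (e ω) : ℝ)) P := by
    refine Integrable.mono' (integrable_const (‖Av‖ * ‖v‖))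
      (hinAm.mul hinvm).aestronglyMeasurable ?_
    filter_upwards [hsph] with ω hω
    rw [Real.norm_eq_abs, abs_mul]
    exact mul_le_mul (haabs ω hω) (hbabs ω hω) (abs_nonneg _) (norm_nonneg _)
  have hX4int : Integrable (fun ω => (inner ℝ Av (e ω) : ℝ) * (inner ℝ Av (e ω) : ℝ)) P := by
    refine Integrable.mono' (integrable_const (‖Av‖ * ‖Av‖))
      (hinAm.mul hinAm).aestronglyMeasurable ?_
    filter_upwards [hsph] with ω hω
    rw [Real.norm_eq_abs, abs_mul]
    exact mul_le_mul (haabs ω hω) (haabs ω hω) (abs_nonneg _) (norm_nonneg _)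
  have hX2int : Integrable (fun ω => ξp ω * (‖v + τ • e ω‖ * (inner ℝ v (e ω) : ℝ))) P := by
    refine Integrable.mono' (hξpint.norm.const_mul ((‖v‖ + τ) * ‖v‖))
      (hξpmeas.mul (hnpm.mul hinvm)).aestronglyMeasurable ?_
    filter_upwards [hsph] with ω hω
    rw [Real.norm_eq_abs, abs_mul]
    have h1 : |‖v + τ • e ω‖ * (inner ℝ v (e ω) : ℝ)| ≤ (‖v‖ + τ) * ‖v‖ := by
      rw [abs_mul, abs_of_nonneg (norm_nonneg _)]
      exact mul_le_mul (hP1le ω hω) (hbabs ω hω) (abs_nonneg _) (by positivity)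
    calc |ξp ω| * |‖v + τ • e ω‖ * (inner ℝ v (e ω) : ℝ)|
        ≤ |ξp ω| * ((‖v‖ + τ) * ‖v‖) := mul_le_mul_of_nonneg_left h1 (abs_nonneg _)
      _ = (‖v‖ + τ) * ‖v‖ * ‖ξp ω‖ := by rw [Real.norm_eq_abs]; ring
  have hX3int : Integrable (fun ω => ξm ω * (‖v - τ • e ω‖ * (inner ℝ v (e ω) : ℝ))) P := by
    refine Integrable.mono' (hξmint.norm.const_mul ((‖v‖ + τ) * ‖v‖))
      (hξmmeas.mul (hnmm.mul hinvm)).aestronglyMeasurable ?_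
    filter_upwards [hsph] with ω hω
    rw [Real.norm_eq_abs, abs_mul]
    have h1 : |‖v - τ • e ω‖ * (inner ℝ v (e ω) : ℝ)| ≤ (‖v‖ + τ) * ‖v‖ := by
      rw [abs_mul, abs_of_nonneg (norm_nonneg _)]
      exact mul_le_mul (hM1le ω hω) (hbabs ω hω) (abs_nonneg _) (by positivity)
    calc |ξm ω| * |‖v - τ • e ω‖ * (inner ℝ v (e ω) : ℝ)|
        ≤ |ξm ω| * ((‖v‖ + τ) * ‖v‖) := mul_le_mul_of_nonneg_left h1 (abs_nonneg _)
      _ = (‖v‖ + τ) * ‖v‖ * ‖ξm ω‖ := by rw [Real.norm_eq_abs]; ring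
  have hX5int : Integrable (fun ω => (ξp ω) ^ 2) P := hξpL2.integrable_sq
  have hX6int : Integrable (fun ω => (ξm ω) ^ 2) P := hξmL2.integrable_sq
  have hS1 : Integrable (fun ω => C0 + C1 * ((inner ℝ Av (e ω) : ℝ) * (inner ℝ v (e ω) : ℝ))) P :=
    (integrable_const C0).add (hX1int.const_mul C1)
  have hS2 : Integrable (fun ω => C0 + C1 * ((inner ℝ Av (e ω) : ℝ) * (inner ℝ v (e ω) : ℝ))
      + C2 * (ξp ω * (‖v + τ • e ω‖ * (inner ℝ v (e ω) : ℝ)))) P :=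
    hS1.add (hX2int.const_mul C2)
  have hS3 : Integrable (fun ω => C0 + C1 * ((inner ℝ Av (e ω) : ℝ) * (inner ℝ v (e ω) : ℝ))
      + C2 * (ξp ω * (‖v + τ • e ω‖ * (inner ℝ v (e ω) : ℝ)))
      + C3 * (ξm ω * (‖v - τ • e ω‖ * (inner ℝ v (e ω) : ℝ)))) P :=
    hS2.add (hX3int.const_mul C3)
  have hS4 : Integrable (fun ω => C0 + C1 * ((inner ℝ Av (e ω) : ℝ) * (inner ℝ v (e ω) : ℝ))
      + C2 * (ξp ω * (‖v + τ • e ω‖ * (inner ℝ v (e ω) : ℝ)))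
      + C3 * (ξm ω * (‖v - τ • e ω‖ * (inner ℝ v (e ω) : ℝ)))
      + C4 * ((inner ℝ Av (e ω) : ℝ) * (inner ℝ Av (e ω) : ℝ))) P :=
    hS3.add (hX4int.const_mul C4)
  have hS5 : Integrable (fun ω => C0 + C1 * ((inner ℝ Av (e ω) : ℝ) * (inner ℝ v (e ω) : ℝ))
      + C2 * (ξp ω * (‖v + τ • e ω‖ * (inner ℝ v (e ω) : ℝ)))
      + C3 * (ξm ω * (‖v - τ • e ω‖ * (inner ℝ v (e ω) : ℝ)))
      + C4 * ((inner ℝ Av (e ω) : ℝ) * (inner ℝ Av (e ω) : ℝ))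
      + C5 * (ξp ω) ^ 2) P :=
    hS4.add (hX5int.const_mul C5)
  have hFint : Integrable F P := by
    rw [hF]
    exact hS5.add (hX6int.const_mul C5)
  -- measurability of g and the LHS
  have hgmeas : Measurable g := by
    have hgfun : g = fun ω => ((d : ℝ) • (inner ℝ Av (e ω) : ℝ) • e ω
        + ((d : ℝ) / (2 * τ)) •
          ((ξp ω + δ (x + τ • e ω)) * ‖x + τ • e ω - xstar‖
            - (ξm ω + δ (x - τ • e ω)) * ‖x - τ • e ω - xstar‖) • e ω) := funext hg
    rw [hgfun]
    have hm1 : Measurable fun ω => (inner ℝ Av (e ω) : ℝ) • e ω := hinAm.smul he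
    have hsc : Measurable fun ω => ((ξp ω + δ (x + τ • e ω)) * ‖x + τ • e ω - xstar‖
        - (ξm ω + δ (x - τ • e ω)) * ‖x - τ • e ω - xstar‖) := by
      have hp : Measurable fun ω => x + τ • e ω := measurable_const.add (he.const_smul τ)
      have hmn : Measurable fun ω => x - τ • e ω := measurable_const.sub (he.const_smul τ)
      exact ((hξpmeas.add (hδmeas.comp hp)).mul (hp.sub measurable_const).norm).sub
        ((hξmmeas.add (hδmeas.comp hmn)).mul (hmn.sub measurable_const).norm)
    exact (hm1.const_smul ((d:ℝ))).add ((hsc.smul he).const_smul ((d:ℝ)/(2*τ)))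
  have hLmeas : AEStronglyMeasurable (fun ω => ‖x - γ • g ω - xstar‖ ^ 2) P :=
    (((measurable_const.sub (hgmeas.const_smul γ)).sub measurable_const).norm.pow_const
      2).aestronglyMeasurable
  have hkeyae : ∀ᵐ ω ∂P, ‖x - γ • g ω - xstar‖ ^ 2 ≤ F ω := by
    filter_upwards [hsph] with ω hω using key ω hω
  have hLint : Integrable (fun ω => ‖x - γ • g ω - xstar‖ ^ 2) P := by
    refine Integrable.mono' hFint hLmeas ?_
    filter_upwards [hkeyae] with ω hω
    rw [Real.norm_eq_abs, abs_of_nonneg (by positivity)]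
    exact hω
  have hmono : ∫ ω, ‖x - γ • g ω - xstar‖ ^ 2 ∂P ≤ ∫ ω, F ω ∂P :=
    integral_mono_ae hLint hFint hkeyae
  -- compute the integral of F
  haveI : IsProbabilityMeasure (P.map e) := Measure.isProbabilityMeasure_map he.aemeasurable
  have hI1 : ∫ ω, (inner ℝ Av (e ω) : ℝ) * (inner ℝ v (e ω) : ℝ) ∂P = (inner ℝ Av v : ℝ) / d := by
    have hm : Measurable fun y : EuclideanSpace ℝ (Fin d) =>
        (inner ℝ Av y : ℝ) * (inner ℝ v y : ℝ) :=
      (measurable_const.inner measurable_id).mul (measurable_const.inner measurable_id)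
    rw [← integral_map he.aemeasurable hm.aestronglyMeasurable]
    exact sphere_isotropy hd (P.map e) hesphere heinv Av v
  have hI4 : ∫ ω, (inner ℝ Av (e ω) : ℝ) * (inner ℝ Av (e ω) : ℝ) ∂P = ‖Av‖ ^ 2 / d := by
    have hm : Measurable fun y : EuclideanSpace ℝ (Fin d) =>
        (inner ℝ Av y : ℝ) * (inner ℝ Av y : ℝ) :=
      (measurable_const.inner measurable_id).mul (measurable_const.inner measurable_id)
    rw [← integral_map he.aemeasurable hm.aestronglyMeasurable,
      sphere_isotropy hd (P.map e) hesphere heinv Av Av, real_inner_self_eq_norm_sq]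
  have hI2 : ∫ ω, ξp ω * (‖v + τ • e ω‖ * (inner ℝ v (e ω) : ℝ)) ∂P = 0 := by
    have hhm : Measurable fun y : EuclideanSpace ℝ (Fin d) =>
        ‖v + τ • y‖ * (inner ℝ v y : ℝ) :=
      ((measurable_const.add (measurable_id.const_smul τ)).norm).mul
        (measurable_const.inner measurable_id)
    have hind2 : IndepFun ξp ((fun y : EuclideanSpace ℝ (Fin d) =>
        ‖v + τ • y‖ * (inner ℝ v y : ℝ)) ∘ e) P := hindp.comp measurable_id hhm
    calc ∫ ω, ξp ω * (‖v + τ • e ω‖ * (inner ℝ v (e ω) : ℝ)) ∂P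
        = ∫ ω, (ξp * ((fun y : EuclideanSpace ℝ (Fin d) =>
            ‖v + τ • y‖ * (inner ℝ v y : ℝ)) ∘ e)) ω ∂P := rfl
      _ = (∫ ω, ξp ω ∂P) * ∫ ω, ((fun y : EuclideanSpace ℝ (Fin d) =>
            ‖v + τ • y‖ * (inner ℝ v y : ℝ)) ∘ e) ω ∂P :=
          hind2.integral_mul_eq_mul_integral hξpmeas.aestronglyMeasurable (hhm.comp he).aestronglyMeasurable
      _ = 0 := by rw [hξpmean, zero_mul]
  have hI3 : ∫ ω, ξm ω * (‖v - τ • e ω‖ * (inner ℝ v (e ω) : ℝ)) ∂P = 0 := by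
    have hhm : Measurable fun y : EuclideanSpace ℝ (Fin d) =>
        ‖v - τ • y‖ * (inner ℝ v y : ℝ) :=
      ((measurable_const.sub (measurable_id.const_smul τ)).norm).mul
        (measurable_const.inner measurable_id)
    have hind2 : IndepFun ξm ((fun y : EuclideanSpace ℝ (Fin d) =>
        ‖v - τ • y‖ * (inner ℝ v y : ℝ)) ∘ e) P := hindm.comp measurable_id hhm
    calc ∫ ω, ξm ω * (‖v - τ • e ω‖ * (inner ℝ v (e ω) : ℝ)) ∂P
        = ∫ ω, (ξm * ((fun y : EuclideanSpace ℝ (Fin d) =>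
            ‖v - τ • y‖ * (inner ℝ v y : ℝ)) ∘ e)) ω ∂P := rfl
      _ = (∫ ω, ξm ω ∂P) * ∫ ω, ((fun y : EuclideanSpace ℝ (Fin d) =>
            ‖v - τ • y‖ * (inner ℝ v y : ℝ)) ∘ e) ω ∂P :=
          hind2.integral_mul_eq_mul_integral hξmmeas.aestronglyMeasurable (hhm.comp he).aestronglyMeasurable
      _ = 0 := by rw [hξmmean, zero_mul]
  have hiF : ∫ ω, F ω ∂P = C0 + C1 * ((inner ℝ Av v : ℝ) / d) + C2 * 0 + C3 * 0
      + C4 * (‖Av‖ ^ 2 / d) + C5 * (∫ ω, (ξp ω) ^ 2 ∂P) + C5 * (∫ ω, (ξm ω) ^ 2 ∂P) := by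
    rw [hF]
    rw [integral_add hS5 (hX6int.const_mul C5), integral_add hS4 (hX5int.const_mul C5),
      integral_add hS3 (hX4int.const_mul C4), integral_add hS2 (hX3int.const_mul C3),
      integral_add hS1 (hX2int.const_mul C2),
      integral_add (integrable_const C0) (hX1int.const_mul C1)]
    simp only [integral_const_mul, integral_const, measure_univ, probReal_univ, ENNReal.toReal_one,
      smul_eq_mul, one_mul]
    rw [hI1, hI2, hI3, hI4]
  -- final estimates
  have e1 : C1 * ((inner ℝ Av v : ℝ) / d) = -(2 * γ * (inner ℝ Av v : ℝ)) := by
    rw [hC1]; field_simp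
  have e2 : C4 * (‖Av‖ ^ 2 / d) = 5 * γ ^ 2 * (d:ℝ) * ‖Av‖ ^ 2 := by
    rw [hC4]; field_simp
  have e3 : 5 * γ ^ 2 * (d:ℝ) * ‖Av‖ ^ 2 ≤ γ * (inner ℝ Av v : ℝ) := by
    have h5 : 5 * γ ^ 2 * (d:ℝ) * ‖Av‖ ^ 2 ≤ 5 * γ ^ 2 * (d:ℝ) * (L * (inner ℝ Av v : ℝ)) :=
      mul_le_mul_of_nonneg_left hWQ (by positivity)
    have h6 : 5 * γ ^ 2 * (d:ℝ) * (L * (inner ℝ Av v : ℝ))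
        = γ * (γ * (5 * (d:ℝ) * L)) * (inner ℝ Av v : ℝ) := by ring
    have h7 : γ * (γ * (5 * (d:ℝ) * L)) * (inner ℝ Av v : ℝ) ≤ γ * 1 * (inner ℝ Av v : ℝ) :=
      mul_le_mul_of_nonneg_right (mul_le_mul_of_nonneg_left hγdL hγ0.le) hQ0
    calc 5 * γ ^ 2 * (d:ℝ) * ‖Av‖ ^ 2 ≤ γ * (γ * (5 * (d:ℝ) * L)) * (inner ℝ Av v : ℝ) := by
          rw [← h6]; exact h5
      _ ≤ γ * 1 * (inner ℝ Av v : ℝ) := h7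
      _ = γ * (inner ℝ Av v : ℝ) := by ring
  have e4 : γ * (μ * ‖v‖ ^ 2) ≤ γ * (inner ℝ Av v : ℝ) := mul_le_mul_of_nonneg_left hQμ hγ0.le
  have hc2p : C5 * (∫ ω, (ξp ω) ^ 2 ∂P) ≤ C5 * σ ^ 2 := mul_le_mul_of_nonneg_left hξpvar hC5nn
  have hc2m : C5 * (∫ ω, (ξm ω) ^ 2 ∂P) ≤ C5 * σ ^ 2 := mul_le_mul_of_nonneg_left hξmvar hC5nn
  have hK2 : (‖v‖ + τ) ^ 2 ≤ 2 * ‖v‖ ^ 2 + 2 * τ ^ 2 := sq_add_le2 ‖v‖ τ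
  have e5 : (5/2) * γ ^ 2 * ((d:ℝ) ^ 2 / τ ^ 2) * Δ ^ 2 * (‖v‖ + τ) ^ 2
      + (5/4) * γ ^ 2 * ((d:ℝ) ^ 2 / τ ^ 2) * (‖v‖ + τ) ^ 2 * σ ^ 2
      + (5/4) * γ ^ 2 * ((d:ℝ) ^ 2 / τ ^ 2) * (‖v‖ + τ) ^ 2 * σ ^ 2
      ≤ 5 * (d:ℝ) ^ 2 * γ ^ 2 * (Δ ^ 2 + σ ^ 2) / τ ^ 2 * ‖v‖ ^ 2
        + 5 * (d:ℝ) ^ 2 * γ ^ 2 * (Δ ^ 2 + σ ^ 2) := by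
    have hc : (0:ℝ) ≤ (5/2) * γ ^ 2 * ((d:ℝ) ^ 2 / τ ^ 2) * (Δ ^ 2 + σ ^ 2) := by positivity
    have h8 := mul_le_mul_of_nonneg_left hK2 hc
    calc (5/2) * γ ^ 2 * ((d:ℝ) ^ 2 / τ ^ 2) * Δ ^ 2 * (‖v‖ + τ) ^ 2
          + (5/4) * γ ^ 2 * ((d:ℝ) ^ 2 / τ ^ 2) * (‖v‖ + τ) ^ 2 * σ ^ 2
          + (5/4) * γ ^ 2 * ((d:ℝ) ^ 2 / τ ^ 2) * (‖v‖ + τ) ^ 2 * σ ^ 2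
        = (5/2) * γ ^ 2 * ((d:ℝ) ^ 2 / τ ^ 2) * (Δ ^ 2 + σ ^ 2) * (‖v‖ + τ) ^ 2 := by ring
      _ ≤ (5/2) * γ ^ 2 * ((d:ℝ) ^ 2 / τ ^ 2) * (Δ ^ 2 + σ ^ 2)
            * (2 * ‖v‖ ^ 2 + 2 * τ ^ 2) := h8
      _ = 5 * (d:ℝ) ^ 2 * γ ^ 2 * (Δ ^ 2 + σ ^ 2) / τ ^ 2 * ‖v‖ ^ 2
            + 5 * (d:ℝ) ^ 2 * γ ^ 2 * (Δ ^ 2 + σ ^ 2) := by field_simp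
  have e6 : 2 * γ * ((d:ℝ) / τ) * Δ * (‖v‖ + τ) * ‖v‖
      = 2 * (d:ℝ) * γ * Δ / τ * ‖v‖ ^ 2 + 2 * (d:ℝ) * γ * Δ * ‖v‖ := by
    field_simp
  refine le_trans hmono ?_
  rw [hiF]
  calc C0 + C1 * ((inner ℝ Av v : ℝ) / d) + C2 * 0 + C3 * 0 + C4 * (‖Av‖ ^ 2 / d)
        + C5 * (∫ ω, (ξp ω) ^ 2 ∂P) + C5 * (∫ ω, (ξm ω) ^ 2 ∂P)
      = C0 + C1 * ((inner ℝ Av v : ℝ) / d) + C4 * (‖Av‖ ^ 2 / d)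
        + C5 * (∫ ω, (ξp ω) ^ 2 ∂P) + C5 * (∫ ω, (ξm ω) ^ 2 ∂P) := by ring
    _ ≤ C0 + C1 * ((inner ℝ Av v : ℝ) / d) + C4 * (‖Av‖ ^ 2 / d) + C5 * σ ^ 2 + C5 * σ ^ 2 := by
        linarith [hc2p, hc2m]
    _ = C0 + (-(2 * γ * (inner ℝ Av v : ℝ))) + 5 * γ ^ 2 * (d:ℝ) * ‖Av‖ ^ 2
          + C5 * σ ^ 2 + C5 * σ ^ 2 := by rw [e1, e2]
    _ ≤ C0 + (-(2 * γ * (inner ℝ Av v : ℝ))) + γ * (inner ℝ Av v : ℝ)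
          + C5 * σ ^ 2 + C5 * σ ^ 2 := by linarith [e3]
    _ ≤ (1 - γ * μ + 5 * d ^ 2 * γ ^ 2 * (Δ ^ 2 + σ ^ 2) / τ ^ 2
          + 2 * d * γ * Δ / τ) * ‖v‖ ^ 2
        + 2 * d * γ * Δ * ‖v‖
        + 5 * d ^ 2 * γ ^ 2 * (Δ ^ 2 + σ ^ 2) := by
        rw [hC0, hC5]
        linarith [e4, e5, e6]
end

section
/- Let d ≥ 1, 0 < μ ≤ L, and let A be a real symmetric d×d matrix with μ‖v‖² ≤ vᵀAv ≤ L‖v‖² for all v ∈ ℝ^d. Let x, x* ∈ ℝ^d, τ > 0, σ ≥ 0. Let e be uniformly distributed on the unit Euclidean sphere S^{d−1}, and ξ⁺, ξ⁻ real random variables independent of e with E[ξ⁺] = E[ξ⁻] = 0, E[(ξ⁺)²] ≤ σ², E[(ξ⁻)²] ≤ σ². Define g = d·⟨A(x−x*), e⟩·e + (d/(2τ))·(ξ⁺·‖x+τe−x*‖ − ξ⁻·‖x−τe−x*‖)·e. Then for every 0 < γ ≤ 1/(5dL), E[‖x − γg − x*‖²] ≤ (1 − γμ + 5d²γ²σ²/τ²)·‖x−x*‖²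 + 5d²γ²σ². -/
open MeasureTheory ProbabilityTheory

lemma sphere_second_moment {d : ℕ} (hd : 1 ≤ d) (ν : Measure (EuclideanSpace ℝ (Fin d)))
    [IsProbabilityMeasure ν]
    (hs : ν (Metric.sphere (0 : EuclideanSpace ℝ (Fin d)) 1)ᶜ = 0)
    (hinv : ∀ T : EuclideanSpace ℝ (Fin d) ≃ₗᵢ[ℝ] EuclideanSpace ℝ (Fin d), ν.map T = ν)
    (u v : EuclideanSpace ℝ (Fin d)) :
    ∫ w, (inner ℝ u w : ℝ) * (inner ℝ v w : ℝ) ∂ν = (inner ℝ u v : ℝ) / d := by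
  have hae : ∀ᵐ w ∂ν, ‖w‖ = 1 := by
    have : ∀ᵐ w ∂ν, w ∈ Metric.sphere (0 : EuclideanSpace ℝ (Fin d)) 1 :=
      (ae_iff.2 (by simpa [not_imp_not, Set.compl_def] using hs))
    filter_upwards [this] with w hw using mem_sphere_zero_iff_norm.mp hw
  have hmeas : ∀ p : EuclideanSpace ℝ (Fin d),
      Continuous fun w : EuclideanSpace ℝ (Fin d) => (inner ℝ p w : ℝ) :=
    fun p => continuous_const.inner continuous_id
  have hint : ∀ p q : EuclideanSpace ℝ (Fin d),
      Integrable (fun w => (inner ℝ p w : ℝ) * (inner ℝ q w : ℝ)) ν := by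
    intro p q
    refine Integrable.mono' (integrable_const (‖p‖ * ‖q‖)) (((hmeas p).mul (hmeas q)).aestronglyMeasurable) ?_
    filter_upwards [hae] with w hw
    rw [Real.norm_eq_abs, abs_mul]
    calc |(inner ℝ p w : ℝ)| * |(inner ℝ q w : ℝ)| ≤ (‖p‖ * ‖w‖) * (‖q‖ * ‖w‖) :=
          mul_le_mul (abs_real_inner_le_norm p w) (abs_real_inner_le_norm q w) (abs_nonneg _)
            (by positivity)
      _ = ‖p‖ * ‖q‖ := by rw [hw]; ring
  have hBeq : ∀ p q : EuclideanSpace ℝ (Fin d), ‖p‖ = ‖q‖ →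
      ∫ w, (inner ℝ p w : ℝ) ^ 2 ∂ν = ∫ w, (inner ℝ q w : ℝ) ^ 2 ∂ν := by
    intro p q hpq
    set T := Submodule.reflection (Submodule.span ℝ {p - q})ᗮ with hT
    have hTp : T p = q := Submodule.reflection_sub hpq
    have h1 : ∫ w, (inner ℝ q w : ℝ) ^ 2 ∂ν = ∫ w, (inner ℝ q (T w) : ℝ) ^ 2 ∂ν := by
      conv_lhs => rw [← hinv T]
      exact integral_map (T.continuous.measurable.aemeasurable)
        (((hmeas q).pow 2).aestronglyMeasurable)
    rw [h1]
    congr 1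
    ext w
    rw [← hTp, LinearIsometryEquiv.inner_map_map]
  -- value on unit vectors
  set u₀ : EuclideanSpace ℝ (Fin d) := EuclideanSpace.single ⟨0, hd⟩ 1 with hu₀
  have hu₀n : ‖u₀‖ = 1 := by simp [hu₀]
  set c₀ : ℝ := ∫ w, (inner ℝ u₀ w : ℝ) ^ 2 ∂ν with hc₀
  have hsq : ∀ p : EuclideanSpace ℝ (Fin d), (fun w => (inner ℝ p w : ℝ) ^ 2)
      = fun w => (inner ℝ p w : ℝ) * (inner ℝ p w : ℝ) := by intro p; ext w; ring
  have hsum : (d : ℝ) * c₀ = 1 := by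
    have h1 : ∀ i : Fin d, ∫ w, (inner ℝ (EuclideanSpace.single i (1:ℝ)) w : ℝ) ^ 2 ∂ν = c₀ := by
      intro i
      exact hBeq _ _ (by simp [hu₀])
    have h2 : ∫ w, (∑ i : Fin d, (inner ℝ (EuclideanSpace.single i (1:ℝ)) w : ℝ) ^ 2) ∂ν
        = (d : ℝ) * c₀ := by
      rw [integral_finset_sum _ (fun i _ => by rw [hsq]; exact hint _ _)]
      rw [Finset.sum_congr rfl (fun i _ => h1 i)]
      simp [mul_comm]
    rw [← h2]
    have h3 : ∫ w, (∑ i : Fin d, (inner ℝ (EuclideanSpace.single i (1:ℝ)) w : ℝ) ^ 2) ∂ν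
        = ∫ w, ‖w‖ ^ 2 ∂ν := by
      congr 1; ext w
      have : ∀ i : Fin d, (inner ℝ (EuclideanSpace.single i (1:ℝ)) w : ℝ) = w i := by
        intro i; rw [EuclideanSpace.inner_single_left]; simp
      simp_rw [this]
      rw [← real_inner_self_eq_norm_sq]
      simp only [PiLp.inner_apply, RCLike.inner_apply, conj_trivial, sq]
    rw [h3]
    have : ∫ w, ‖w‖ ^ 2 ∂ν = ∫ w, (1:ℝ) ∂ν := by
      apply integral_congr_ae
      filter_upwards [hae] with w hw
      rw [hw]; norm_num
    rw [this]; simp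
  have hdpos : (0:ℝ) < d := by exact_mod_cast Nat.lt_of_lt_of_le Nat.zero_lt_one hd
  have hc₀val : c₀ = 1 / d := by field_simp at hsum ⊢; linarith
  have key : ∀ p : EuclideanSpace ℝ (Fin d), ∫ w, (inner ℝ p w : ℝ) ^ 2 ∂ν = ‖p‖ ^ 2 / d := by
    intro p
    by_cases hp : p = 0
    · simp [hp]
    · have hpn : ‖p‖ ≠ 0 := norm_ne_zero_iff.mpr hp
      have h1 : ∀ w, (inner ℝ p w : ℝ) ^ 2 = ‖p‖ ^ 2 * (inner ℝ (‖p‖⁻¹ • p) w : ℝ) ^ 2 := by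
        intro w
        rw [real_inner_smul_left]
        field_simp
      simp_rw [h1]
      rw [integral_const_mul]
      have h2 : ∫ w, (inner ℝ (‖p‖⁻¹ • p) w : ℝ) ^ 2 ∂ν = c₀ := by
        apply hBeq
        rw [norm_smul, hu₀n]
        simp [abs_of_nonneg (inv_nonneg.mpr (norm_nonneg p)), hpn]
      rw [h2, hc₀val]; ring
  -- polarization
  have hpol : (2:ℝ) * ∫ w, (inner ℝ u w : ℝ) * (inner ℝ v w : ℝ) ∂ν
      = (∫ w, (inner ℝ (u + v) w : ℝ) ^ 2 ∂ν) - (∫ w, (inner ℝ u w : ℝ) ^ 2 ∂ν)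
        - (∫ w, (inner ℝ v w : ℝ) ^ 2 ∂ν) := by
    have hintu : Integrable (fun w => (inner ℝ u w : ℝ) ^ 2) ν := by rw [hsq]; exact hint u u
    have hintv : Integrable (fun w => (inner ℝ v w : ℝ) ^ 2) ν := by rw [hsq]; exact hint v v
    have h1 : (fun w => (inner ℝ (u + v) w : ℝ) ^ 2)
        = fun w => ((inner ℝ u w : ℝ) ^ 2 + (inner ℝ v w : ℝ) ^ 2)
            + 2 * ((inner ℝ u w : ℝ) * (inner ℝ v w : ℝ)) := by
      ext w; rw [inner_add_left]; ring
    have hI1 : Integrable (fun w => (inner ℝ u w : ℝ) ^ 2 + (inner ℝ v w : ℝ) ^ 2) ν :=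
      hintu.add hintv
    have hI2 : Integrable (fun w => 2 * ((inner ℝ u w : ℝ) * (inner ℝ v w : ℝ))) ν :=
      (hint u v).const_mul 2
    rw [h1, integral_add hI1 hI2, integral_add hintu hintv, integral_const_mul]
    ring
  have := hpol
  rw [key, key, key, norm_add_sq_real] at this
  have h2 : (2:ℝ) * ∫ w, (inner ℝ u w : ℝ) * (inner ℝ v w : ℝ) ∂ν = 2 * ((inner ℝ u v : ℝ) / d) := by
    rw [this]; field_simp; ring
  linarith

lemma integral_comp_map {Ω : Type*} [MeasurableSpace Ω] (P : Measure Ω) {d : ℕ}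
    (e : Ω → EuclideanSpace ℝ (Fin d)) (he : Measurable e)
    (f : EuclideanSpace ℝ (Fin d) → ℝ) (hf : Continuous f) :
    ∫ ω, f (e ω) ∂P = ∫ w, f w ∂(P.map e) :=
  (integral_map he.aemeasurable hf.aestronglyMeasurable).symm

lemma quad_expand {d : ℕ} (M : EuclideanSpace ℝ (Fin d) →ₗ[ℝ] EuclideanSpace ℝ (Fin d))
    (hsym : ∀ p q : EuclideanSpace ℝ (Fin d), (inner ℝ (M p) q : ℝ) = (inner ℝ p (M q) : ℝ))
    (t : ℝ) (y : EuclideanSpace ℝ (Fin d)) :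
    (inner ℝ (M (y - t • M y)) (y - t • M y) : ℝ)
      = (inner ℝ (M y) y : ℝ) - 2 * t * ‖M y‖ ^ 2 + t ^ 2 * (inner ℝ (M (M y)) (M y) : ℝ) := by
  have h1 : (inner ℝ (M y) (M y) : ℝ) = ‖M y‖ ^ 2 := real_inner_self_eq_norm_sq _
  have h2 : (inner ℝ (M (M y)) y : ℝ) = ‖M y‖ ^ 2 := by
    rw [hsym (M y) y, real_inner_comm, h1]
  rw [map_sub, M.map_smul, inner_sub_left, inner_sub_right, inner_sub_right,
    real_inner_smul_left, real_inner_smul_left, real_inner_smul_right, real_inner_smul_right,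
    h1, h2]
  ring


set_option maxHeartbeats 8000000 in
/-- one-step descent estimate, Theorem 3 with `Δ = 0`: for the
zeroth-order gradient estimator `g` of the quadratic `½(x-x*)ᵀA(x-x*)` with
`μI ⪯ A ⪯ LI`, zero-mean noises with second moment at most `σ²`, and any step
size `0 < γ ≤ 1/(5dL)`,
`E‖x - γg - x*‖² ≤ (1 - γμ + 5d²γ²σ²/τ²)‖x-x*‖² + 5d²γ²σ²`. -/
theorem zoGD_one_step_no_deterministic_noise (d : ℕ) (hd : 1 ≤ d)
    (μ L : ℝ) (hμ : 0 < μ) (hμL : μ ≤ L)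
    (A : Matrix (Fin d) (Fin d) ℝ) (hAsymm : A.IsSymm)
    (hAlow : ∀ v : EuclideanSpace ℝ (Fin d),
      μ * ‖v‖ ^ 2 ≤ (inner ℝ (Matrix.toEuclideanLin A v) v : ℝ))
    (hAupp : ∀ v : EuclideanSpace ℝ (Fin d),
      (inner ℝ (Matrix.toEuclideanLin A v) v : ℝ) ≤ L * ‖v‖ ^ 2)
    (x xstar : EuclideanSpace ℝ (Fin d))
    (τ σ : ℝ) (hτ : 0 < τ) (hσ : 0 ≤ σ)
    (Ω : Type*) [MeasurableSpace Ω] (P : Measure Ω) [IsProbabilityMeasure P]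
    (e : Ω → EuclideanSpace ℝ (Fin d)) (he : Measurable e)
    (hesphere : (P.map e) (Metric.sphere (0 : EuclideanSpace ℝ (Fin d)) 1)ᶜ = 0)
    (heinv : ∀ T : EuclideanSpace ℝ (Fin d) ≃ₗᵢ[ℝ] EuclideanSpace ℝ (Fin d),
      (P.map e).map T = P.map e)
    (ξp ξm : Ω → ℝ) (hξpmeas : Measurable ξp) (hξmmeas : Measurable ξm)
    (hξpL2 : MemLp ξp 2 P) (hξmL2 : MemLp ξm 2 P)
    (hξpmean : ∫ ω, ξp ω ∂P = 0) (hξmmean : ∫ ω, ξm ω ∂P = 0)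
    (hξpvar : ∫ ω, (ξp ω) ^ 2 ∂P ≤ σ ^ 2) (hξmvar : ∫ ω, (ξm ω) ^ 2 ∂P ≤ σ ^ 2)
    (hindp : IndepFun ξp e P) (hindm : IndepFun ξm e P)
    (g : Ω → EuclideanSpace ℝ (Fin d))
    (hg : ∀ ω, g ω =
      (d : ℝ) • (inner ℝ (Matrix.toEuclideanLin A (x - xstar)) (e ω) : ℝ) • e ω
      + ((d : ℝ) / (2 * τ)) •
        (ξp ω * ‖x + τ • e ω - xstar‖ - ξm ω * ‖x - τ • e ω - xstar‖) • e ω)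
    (γ : ℝ) (hγ0 : 0 < γ) (hγ : γ ≤ 1 / (5 * d * L)) :
    ∫ ω, ‖x - γ • g ω - xstar‖ ^ 2 ∂P ≤
      (1 - γ * μ + 5 * d ^ 2 * γ ^ 2 * σ ^ 2 / τ ^ 2) * ‖x - xstar‖ ^ 2
        + 5 * d ^ 2 * γ ^ 2 * σ ^ 2 := by
  have hL0 : 0 < L := lt_of_lt_of_le hμ hμL
  have hd0 : (0:ℝ) < d := by exact_mod_cast Nat.lt_of_lt_of_le Nat.zero_lt_one hd
  set M := Matrix.toEuclideanLin A with hM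
  obtain ⟨y, hy⟩ : ∃ y : EuclideanSpace ℝ (Fin d), y = x - xstar := ⟨_, rfl⟩
  -- symmetry of the operator
  have hherm : A.IsHermitian := by
    rw [Matrix.IsHermitian, Matrix.conjTranspose]
    ext i j; simpa using hAsymm.apply i j
  have hsym : ∀ p q : EuclideanSpace ℝ (Fin d), (inner ℝ (M p) q : ℝ) = (inner ℝ p (M q) : ℝ) :=
    Matrix.isHermitian_iff_isSymmetric.mp hherm
  obtain ⟨Q, hQ⟩ : ∃ Q : ℝ, Q = (inner ℝ (M y) y : ℝ) := ⟨_, rfl⟩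
  have hQμ : μ * ‖y‖ ^ 2 ≤ Q := hQ ▸ hAlow y
  have hQ0 : 0 ≤ Q := le_trans (by positivity) hQμ
  -- ‖M y‖² ≤ L * Q
  have hMyQ : ‖M y‖ ^ 2 ≤ L * Q := by
    have h0 : (0:ℝ) ≤ (inner ℝ (M (y - L⁻¹ • M y)) (y - L⁻¹ • M y) : ℝ) :=
      le_trans (by positivity) (hAlow _)
    have hexp := quad_expand M hsym L⁻¹ y
    rw [← hQ] at hexp
    have h3 : (inner ℝ (M (M y)) (M y) : ℝ) ≤ L * ‖M y‖ ^ 2 := hAupp (M y)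
    rw [hexp] at h0
    have hLinv : (0:ℝ) < L⁻¹ := inv_pos.mpr hL0
    have h4 : L⁻¹ ^ 2 * (inner ℝ (M (M y)) (M y) : ℝ) ≤ L⁻¹ ^ 2 * (L * ‖M y‖ ^ 2) :=
      mul_le_mul_of_nonneg_left h3 (by positivity)
    have h5 : L⁻¹ ^ 2 * (L * ‖M y‖ ^ 2) = L⁻¹ * ‖M y‖ ^ 2 := by
      field_simp
    have h6 : L⁻¹ * ‖M y‖ ^ 2 ≤ Q := by linarith
    have h7 := mul_le_mul_of_nonneg_left h6 hL0.le
    rw [← mul_assoc, mul_inv_cancel₀ (ne_of_gt hL0), one_mul] at h7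
    exact h7
  -- measure on the sphere
  set ν := P.map e with hν
  haveI : IsProbabilityMeasure ν := Measure.isProbabilityMeasure_map he.aemeasurable
  have hmom : ∀ p q : EuclideanSpace ℝ (Fin d),
      ∫ w, (inner ℝ p w : ℝ) * (inner ℝ q w : ℝ) ∂ν = (inner ℝ p q : ℝ) / d :=
    sphere_second_moment hd ν hesphere heinv
  have heae : ∀ᵐ ω ∂P, ‖e ω‖ = 1 := by
    have h1 : ∀ᵐ w ∂ν, w ∈ Metric.sphere (0 : EuclideanSpace ℝ (Fin d)) 1 :=
      ae_iff.2 (by simpa [Set.compl_def] using hesphere)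
    have h2 := (ae_map_iff he.aemeasurable Metric.isClosed_sphere.measurableSet).mp h1
    filter_upwards [h2] with ω hω using mem_sphere_zero_iff_norm.mp hω
  -- functions
  set k : ℝ := (d : ℝ) / (2 * τ) with hk
  have hg' : ∀ ω, g ω = ((d : ℝ) * (inner ℝ (M y) (e ω) : ℝ)
      + k * (ξp ω * ‖y + τ • e ω‖ - ξm ω * ‖y - τ • e ω‖)) • e ω := by
    intro ω
    rw [hg ω]
    have h1 : x + τ • e ω - xstar = y + τ • e ω := by rw [hy]; abel
    have h2 : x - τ • e ω - xstar = y - τ • e ω := by rw [hy]; abel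
    rw [h1, h2, smul_smul, smul_smul, ← add_smul, ← hy]
  -- continuity facts
  have hccont : Continuous fun w : EuclideanSpace ℝ (Fin d) => (inner ℝ (M y) w : ℝ) :=
    continuous_const.inner continuous_id
  have hycont : Continuous fun w : EuclideanSpace ℝ (Fin d) => (inner ℝ w y : ℝ) :=
    continuous_id.inner continuous_const
  have hycont' : Continuous fun w : EuclideanSpace ℝ (Fin d) => (inner ℝ y w : ℝ) :=
    continuous_const.inner continuous_id
  have hacont : Continuous fun w : EuclideanSpace ℝ (Fin d) => ‖y + τ • w‖ :=
    by fun_prop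
  have hbcont : Continuous fun w : EuclideanSpace ℝ (Fin d) => ‖y - τ • w‖ :=
    by fun_prop
  -- measurability over Ω
  have hcm : Measurable fun ω => (inner ℝ (M y) (e ω) : ℝ) := hccont.measurable.comp he
  have heym : Measurable fun ω => (inner ℝ (e ω) y : ℝ) := hycont.measurable.comp he
  have ham : Measurable fun ω => ‖y + τ • e ω‖ := hacont.measurable.comp he
  have hbm : Measurable fun ω => ‖y - τ • e ω‖ := hbcont.measurable.comp he
  have hsm : Measurable fun ω => ξp ω * ‖y + τ • e ω‖ - ξm ω * ‖y - τ • e ω‖ :=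
    (hξpmeas.mul ham).sub (hξmmeas.mul hbm)
  -- almost-everywhere bounds
  have hcb : ∀ᵐ ω ∂P, |(inner ℝ (M y) (e ω) : ℝ)| ≤ ‖M y‖ := by
    filter_upwards [heae] with ω hω
    calc |(inner ℝ (M y) (e ω) : ℝ)| ≤ ‖M y‖ * ‖e ω‖ := abs_real_inner_le_norm _ _
      _ = ‖M y‖ := by rw [hω, mul_one]
  have heyb : ∀ᵐ ω ∂P, |(inner ℝ (e ω) y : ℝ)| ≤ ‖y‖ := by
    filter_upwards [heae] with ω hω
    calc |(inner ℝ (e ω) y : ℝ)| ≤ ‖e ω‖ * ‖y‖ := abs_real_inner_le_norm _ _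
      _ = ‖y‖ := by rw [hω, one_mul]
  have hab : ∀ᵐ ω ∂P, ‖y + τ • e ω‖ ≤ ‖y‖ + τ := by
    filter_upwards [heae] with ω hω
    calc ‖y + τ • e ω‖ ≤ ‖y‖ + ‖τ • e ω‖ := norm_add_le _ _
      _ = ‖y‖ + τ := by rw [norm_smul, hω, mul_one, Real.norm_eq_abs, abs_of_pos hτ]
  have hbb : ∀ᵐ ω ∂P, ‖y - τ • e ω‖ ≤ ‖y‖ + τ := by
    filter_upwards [heae] with ω hω
    calc ‖y - τ • e ω‖ ≤ ‖y‖ + ‖τ • e ω‖ := norm_sub_le _ _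
      _ = ‖y‖ + τ := by rw [norm_smul, hω, mul_one, Real.norm_eq_abs, abs_of_pos hτ]
  -- basic integrability
  have hξp1 : Integrable ξp P := hξpL2.integrable one_le_two
  have hξm1 : Integrable ξm P := hξmL2.integrable one_le_two
  have hξp2 : Integrable (fun ω => ξp ω ^ 2) P := hξpL2.integrable_sq
  have hξm2 : Integrable (fun ω => ξm ω ^ 2) P := hξmL2.integrable_sq
  have Imul : ∀ (ξ H : Ω → ℝ) (K : ℝ), Measurable ξ → Integrable ξ P → Measurable H →
      (∀ᵐ ω ∂P, |H ω| ≤ K) → Integrable (fun ω => ξ ω * H ω) P := by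
    intro ξ H K hξm' hξ1 hHm hHb
    refine Integrable.mono' (hξ1.abs.const_mul K) ((hξm'.mul hHm).aestronglyMeasurable) ?_
    filter_upwards [hHb] with ω hb
    rw [Real.norm_eq_abs, abs_mul]
    calc |ξ ω| * |H ω| ≤ |ξ ω| * K := mul_le_mul_of_nonneg_left hb (abs_nonneg _)
      _ = K * |ξ ω| := mul_comm _ _
  have ICB1 : Integrable (fun ω => (inner ℝ (M y) (e ω) : ℝ) * (inner ℝ (e ω) y : ℝ)) P := by
    refine Integrable.mono' (integrable_const (‖M y‖ * ‖y‖))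
      ((hcm.mul heym).aestronglyMeasurable) ?_
    filter_upwards [hcb, heyb] with ω h1 h2
    rw [Real.norm_eq_abs, abs_mul]
    exact mul_le_mul h1 h2 (abs_nonneg _) (norm_nonneg _)
  have ICB3 : Integrable (fun ω => (inner ℝ (M y) (e ω) : ℝ) ^ 2) P := by
    refine Integrable.mono' (integrable_const (‖M y‖ ^ 2))
      ((hcm.pow_const 2).aestronglyMeasurable) ?_
    filter_upwards [hcb] with ω h1
    rw [Real.norm_eq_abs, abs_of_nonneg (sq_nonneg _), ← sq_abs]
    exact pow_le_pow_left₀ (abs_nonneg _) h1 2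
  have Ip2 : Integrable (fun ω => ξp ω * (‖y + τ • e ω‖ * (inner ℝ (e ω) y : ℝ))) P := by
    refine Imul ξp _ ((‖y‖ + τ) * ‖y‖) hξpmeas hξp1 (ham.mul heym) ?_
    filter_upwards [hab, heyb] with ω h1 h2
    rw [abs_mul, abs_of_nonneg (norm_nonneg _)]
    exact mul_le_mul h1 h2 (abs_nonneg _) (by positivity)
  have Im2 : Integrable (fun ω => ξm ω * (‖y - τ • e ω‖ * (inner ℝ (e ω) y : ℝ))) P := by
    refine Imul ξm _ ((‖y‖ + τ) * ‖y‖) hξmmeas hξm1 (hbm.mul heym) ?_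
    filter_upwards [hbb, heyb] with ω h1 h2
    rw [abs_mul, abs_of_nonneg (norm_nonneg _)]
    exact mul_le_mul h1 h2 (abs_nonneg _) (by positivity)
  have Ip4 : Integrable (fun ω => ξp ω * ((inner ℝ (M y) (e ω) : ℝ) * ‖y + τ • e ω‖)) P := by
    refine Imul ξp _ (‖M y‖ * (‖y‖ + τ)) hξpmeas hξp1 (hcm.mul ham) ?_
    filter_upwards [hab, hcb] with ω h1 h2
    rw [abs_mul, abs_of_nonneg (norm_nonneg _)]
    exact mul_le_mul h2 h1 (norm_nonneg _) (norm_nonneg _)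
  have Im4 : Integrable (fun ω => ξm ω * ((inner ℝ (M y) (e ω) : ℝ) * ‖y - τ • e ω‖)) P := by
    refine Imul ξm _ (‖M y‖ * (‖y‖ + τ)) hξmmeas hξm1 (hcm.mul hbm) ?_
    filter_upwards [hbb, hcb] with ω h1 h2
    rw [abs_mul, abs_of_nonneg (norm_nonneg _)]
    exact mul_le_mul h2 h1 (norm_nonneg _) (norm_nonneg _)
  have ICB2 : Integrable (fun ω =>
      (ξp ω * ‖y + τ • e ω‖ - ξm ω * ‖y - τ • e ω‖) * (inner ℝ (e ω) y : ℝ)) P := by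
    have h1 : (fun ω => (ξp ω * ‖y + τ • e ω‖ - ξm ω * ‖y - τ • e ω‖) * (inner ℝ (e ω) y : ℝ))
        = fun ω => ξp ω * (‖y + τ • e ω‖ * (inner ℝ (e ω) y : ℝ))
          - ξm ω * (‖y - τ • e ω‖ * (inner ℝ (e ω) y : ℝ)) := by funext ω; ring
    rw [h1]; exact Ip2.sub Im2
  have ICB4 : Integrable (fun ω =>
      (inner ℝ (M y) (e ω) : ℝ) * (ξp ω * ‖y + τ • e ω‖ - ξm ω * ‖y - τ • e ω‖)) P := by
    have h1 : (fun ω => (inner ℝ (M y) (e ω) : ℝ) * (ξp ω * ‖y + τ • e ω‖ - ξm ω * ‖y - τ • e ω‖))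
        = fun ω => ξp ω * ((inner ℝ (M y) (e ω) : ℝ) * ‖y + τ • e ω‖)
          - ξm ω * ((inner ℝ (M y) (e ω) : ℝ) * ‖y - τ • e ω‖) := by funext ω; ring
    rw [h1]; exact Ip4.sub Im4
  have ICB5 : Integrable (fun ω =>
      (ξp ω * ‖y + τ • e ω‖ - ξm ω * ‖y - τ • e ω‖) ^ 2) P := by
    refine Integrable.mono' ((hξp2.add hξm2).const_mul (2 * (‖y‖ + τ) ^ 2))
      ((hsm.pow_const 2).aestronglyMeasurable) ?_
    filter_upwards [hab, hbb] with ω h1 h2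
    rw [Real.norm_eq_abs, abs_of_nonneg (sq_nonneg _)]
    simp only [Pi.add_apply]
    have ha2 : ‖y + τ • e ω‖ ^ 2 ≤ (‖y‖ + τ) ^ 2 := pow_le_pow_left₀ (norm_nonneg _) h1 2
    have hb2 : ‖y - τ • e ω‖ ^ 2 ≤ (‖y‖ + τ) ^ 2 := pow_le_pow_left₀ (norm_nonneg _) h2 2
    have e1 : (ξp ω * ‖y + τ • e ω‖ - ξm ω * ‖y - τ • e ω‖) ^ 2
        + (ξp ω * ‖y + τ • e ω‖ + ξm ω * ‖y - τ • e ω‖) ^ 2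
        = 2 * (ξp ω ^ 2 * ‖y + τ • e ω‖ ^ 2) + 2 * (ξm ω ^ 2 * ‖y - τ • e ω‖ ^ 2) := by ring
    linarith [mul_le_mul_of_nonneg_left ha2 (sq_nonneg (ξp ω)),
      mul_le_mul_of_nonneg_left hb2 (sq_nonneg (ξm ω)),
      sq_nonneg (ξp ω * ‖y + τ • e ω‖ + ξm ω * ‖y - τ • e ω‖), e1]
  -- pointwise expansion
  have hFeq : ∀ᵐ ω ∂P, ‖x - γ • g ω - xstar‖ ^ 2
      = ‖y‖ ^ 2 + ((-(2 * γ * (d:ℝ))) * ((inner ℝ (M y) (e ω) : ℝ) * (inner ℝ (e ω) y : ℝ))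
        + ((-(2 * γ * k)) * ((ξp ω * ‖y + τ • e ω‖ - ξm ω * ‖y - τ • e ω‖) * (inner ℝ (e ω) y : ℝ))
        + ((γ ^ 2 * (d:ℝ) ^ 2) * ((inner ℝ (M y) (e ω) : ℝ) ^ 2)
        + ((2 * γ ^ 2 * (d:ℝ) * k) * ((inner ℝ (M y) (e ω) : ℝ)
              * (ξp ω * ‖y + τ • e ω‖ - ξm ω * ‖y - τ • e ω‖))
        + (γ ^ 2 * k ^ 2) * ((ξp ω * ‖y + τ • e ω‖ - ξm ω * ‖y - τ • e ω‖) ^ 2))))) := by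
    filter_upwards [heae] with ω hω
    have hxy : x - γ • g ω - xstar = y - γ • g ω := by rw [hy]; abel
    rw [hxy, norm_sub_sq_real, hg' ω, real_inner_smul_right, real_inner_smul_right,
      norm_smul, norm_smul, hω, real_inner_comm y (e ω)]
    simp only [mul_one, mul_pow, sq_abs, Real.norm_eq_abs]
    ring
  -- zero-mean cross terms
  have Hzero : ∀ (ξ : Ω → ℝ), Measurable ξ → IndepFun ξ e P → (∫ ω, ξ ω ∂P = 0) →
      ∀ (h : EuclideanSpace ℝ (Fin d) → ℝ), Continuous h →
      ∫ ω, ξ ω * h (e ω) ∂P = 0 := by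
    intro ξ hξ hind hmean h hh
    have h1 : IndepFun ξ (h ∘ e) P := hind.comp measurable_id hh.measurable
    have h3 := h1.integral_mul_eq_mul_integral hξ.aestronglyMeasurable
      ((hh.measurable.comp he).aestronglyMeasurable)
    rw [hmean, zero_mul] at h3
    exact h3
  -- the five moment values
  have HB1 : ∫ ω, (inner ℝ (M y) (e ω) : ℝ) * (inner ℝ (e ω) y : ℝ) ∂P = Q / d := by
    calc ∫ ω, (inner ℝ (M y) (e ω) : ℝ) * (inner ℝ (e ω) y : ℝ) ∂P
        = ∫ ω, (inner ℝ (M y) (e ω) : ℝ) * (inner ℝ y (e ω) : ℝ) ∂P := by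
          apply integral_congr_ae
          filter_upwards with ω
          rw [real_inner_comm (e ω) y]
      _ = ∫ w, (inner ℝ (M y) w : ℝ) * (inner ℝ y w : ℝ) ∂ν :=
          integral_comp_map P e he (fun w => (inner ℝ (M y) w : ℝ) * (inner ℝ y w : ℝ))
            (hccont.mul hycont')
      _ = (inner ℝ (M y) y : ℝ) / d := hmom (M y) y
      _ = Q / d := by rw [hQ]
  have HB3 : ∫ ω, (inner ℝ (M y) (e ω) : ℝ) ^ 2 ∂P = ‖M y‖ ^ 2 / d := by
    calc ∫ ω, (inner ℝ (M y) (e ω) : ℝ) ^ 2 ∂P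
        = ∫ ω, (inner ℝ (M y) (e ω) : ℝ) * (inner ℝ (M y) (e ω) : ℝ) ∂P := by
          apply integral_congr_ae; filter_upwards with ω; ring
      _ = ∫ w, (inner ℝ (M y) w : ℝ) * (inner ℝ (M y) w : ℝ) ∂ν :=
          integral_comp_map P e he (fun w => (inner ℝ (M y) w : ℝ) * (inner ℝ (M y) w : ℝ))
            (hccont.mul hccont)
      _ = (inner ℝ (M y) (M y) : ℝ) / d := hmom (M y) (M y)
      _ = ‖M y‖ ^ 2 / d := by rw [real_inner_self_eq_norm_sq]
  have HB2 : ∫ ω, (ξp ω * ‖y + τ • e ω‖ - ξm ω * ‖y - τ • e ω‖) * (inner ℝ (e ω) y : ℝ) ∂P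
      = 0 := by
    have h1 : (fun ω => (ξp ω * ‖y + τ • e ω‖ - ξm ω * ‖y - τ • e ω‖) * (inner ℝ (e ω) y : ℝ))
        = fun ω => ξp ω * (‖y + τ • e ω‖ * (inner ℝ (e ω) y : ℝ))
          - ξm ω * (‖y - τ • e ω‖ * (inner ℝ (e ω) y : ℝ)) := by funext ω; ring
    rw [h1, integral_sub Ip2 Im2]
    have z1 : ∫ ω, ξp ω * (‖y + τ • e ω‖ * (inner ℝ (e ω) y : ℝ)) ∂P = 0 :=
      Hzero ξp hξpmeas hindp hξpmean (fun w => ‖y + τ • w‖ * (inner ℝ w y : ℝ))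
        (hacont.mul hycont)
    have z2 : ∫ ω, ξm ω * (‖y - τ • e ω‖ * (inner ℝ (e ω) y : ℝ)) ∂P = 0 :=
      Hzero ξm hξmmeas hindm hξmmean (fun w => ‖y - τ • w‖ * (inner ℝ w y : ℝ))
        (hbcont.mul hycont)
    rw [z1, z2, sub_zero]
  have HB4 : ∫ ω, (inner ℝ (M y) (e ω) : ℝ)
      * (ξp ω * ‖y + τ • e ω‖ - ξm ω * ‖y - τ • e ω‖) ∂P = 0 := by
    have h1 : (fun ω => (inner ℝ (M y) (e ω) : ℝ)
          * (ξp ω * ‖y + τ • e ω‖ - ξm ω * ‖y - τ • e ω‖))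
        = fun ω => ξp ω * ((inner ℝ (M y) (e ω) : ℝ) * ‖y + τ • e ω‖)
          - ξm ω * ((inner ℝ (M y) (e ω) : ℝ) * ‖y - τ • e ω‖) := by funext ω; ring
    rw [h1, integral_sub Ip4 Im4]
    have z1 : ∫ ω, ξp ω * ((inner ℝ (M y) (e ω) : ℝ) * ‖y + τ • e ω‖) ∂P = 0 :=
      Hzero ξp hξpmeas hindp hξpmean (fun w => (inner ℝ (M y) w : ℝ) * ‖y + τ • w‖)
        (hccont.mul hacont)
    have z2 : ∫ ω, ξm ω * ((inner ℝ (M y) (e ω) : ℝ) * ‖y - τ • e ω‖) ∂P = 0 :=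
      Hzero ξm hξmmeas hindm hξmmean (fun w => (inner ℝ (M y) w : ℝ) * ‖y - τ • w‖)
        (hccont.mul hbcont)
    rw [z1, z2, sub_zero]
  have HB5 : ∫ ω, (ξp ω * ‖y + τ • e ω‖ - ξm ω * ‖y - τ • e ω‖) ^ 2 ∂P
      ≤ 4 * σ ^ 2 * (‖y‖ + τ) ^ 2 := by
    have hle : ∀ᵐ ω ∂P, (ξp ω * ‖y + τ • e ω‖ - ξm ω * ‖y - τ • e ω‖) ^ 2
        ≤ 2 * (‖y‖ + τ) ^ 2 * (ξp ω ^ 2 + ξm ω ^ 2) := by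
      filter_upwards [hab, hbb] with ω h1 h2
      have ha2 : ‖y + τ • e ω‖ ^ 2 ≤ (‖y‖ + τ) ^ 2 := pow_le_pow_left₀ (norm_nonneg _) h1 2
      have hb2 : ‖y - τ • e ω‖ ^ 2 ≤ (‖y‖ + τ) ^ 2 := pow_le_pow_left₀ (norm_nonneg _) h2 2
      have e1 : (ξp ω * ‖y + τ • e ω‖ - ξm ω * ‖y - τ • e ω‖) ^ 2
          + (ξp ω * ‖y + τ • e ω‖ + ξm ω * ‖y - τ • e ω‖) ^ 2
          = 2 * (ξp ω ^ 2 * ‖y + τ • e ω‖ ^ 2) + 2 * (ξm ω ^ 2 * ‖y - τ • e ω‖ ^ 2) := by ring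
      linarith [mul_le_mul_of_nonneg_left ha2 (sq_nonneg (ξp ω)),
        mul_le_mul_of_nonneg_left hb2 (sq_nonneg (ξm ω)),
        sq_nonneg (ξp ω * ‖y + τ • e ω‖ + ξm ω * ‖y - τ • e ω‖), e1]
    calc ∫ ω, (ξp ω * ‖y + τ • e ω‖ - ξm ω * ‖y - τ • e ω‖) ^ 2 ∂P
        ≤ ∫ ω, 2 * (‖y‖ + τ) ^ 2 * (ξp ω ^ 2 + ξm ω ^ 2) ∂P :=
          integral_mono_ae ICB5 ((hξp2.add hξm2).const_mul _) hle
      _ = 2 * (‖y‖ + τ) ^ 2 * ((∫ ω, ξp ω ^ 2 ∂P) + ∫ ω, ξm ω ^ 2 ∂P) := by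
          rw [integral_const_mul, integral_add hξp2 hξm2]
      _ ≤ 2 * (‖y‖ + τ) ^ 2 * (σ ^ 2 + σ ^ 2) := by
          refine mul_le_mul_of_nonneg_left ?_ (by positivity)
          exact add_le_add hξpvar hξmvar
      _ = 4 * σ ^ 2 * (‖y‖ + τ) ^ 2 := by ring
  have HB5nn : 0 ≤ ∫ ω, (ξp ω * ‖y + τ • e ω‖ - ξm ω * ‖y - τ • e ω‖) ^ 2 ∂P :=
    integral_nonneg fun ω => sq_nonneg _
  -- assemble the integral
  set J5 : ℝ := ∫ ω, (ξp ω * ‖y + τ • e ω‖ - ξm ω * ‖y - τ • e ω‖) ^ 2 ∂P with hJ5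
  have key : ∫ ω, ‖x - γ • g ω - xstar‖ ^ 2 ∂P
      = ‖y‖ ^ 2 - 2 * γ * Q + γ ^ 2 * (d:ℝ) * ‖M y‖ ^ 2 + γ ^ 2 * k ^ 2 * J5 := by
    have K1 : Integrable (fun ω => (-(2 * γ * (d:ℝ)))
        * ((inner ℝ (M y) (e ω) : ℝ) * (inner ℝ (e ω) y : ℝ))) P := ICB1.const_mul _
    have K2 : Integrable (fun ω => (-(2 * γ * k))
        * ((ξp ω * ‖y + τ • e ω‖ - ξm ω * ‖y - τ • e ω‖) * (inner ℝ (e ω) y : ℝ))) P :=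
      ICB2.const_mul _
    have K3 : Integrable (fun ω => (γ ^ 2 * (d:ℝ) ^ 2)
        * ((inner ℝ (M y) (e ω) : ℝ) ^ 2)) P := ICB3.const_mul _
    have K4 : Integrable (fun ω => (2 * γ ^ 2 * (d:ℝ) * k) * ((inner ℝ (M y) (e ω) : ℝ)
        * (ξp ω * ‖y + τ • e ω‖ - ξm ω * ‖y - τ • e ω‖))) P := ICB4.const_mul _
    have K5 : Integrable (fun ω => (γ ^ 2 * k ^ 2)
        * ((ξp ω * ‖y + τ • e ω‖ - ξm ω * ‖y - τ • e ω‖) ^ 2)) P := ICB5.const_mul _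
    have K45 : Integrable (fun ω => (2 * γ ^ 2 * (d:ℝ) * k) * ((inner ℝ (M y) (e ω) : ℝ)
        * (ξp ω * ‖y + τ • e ω‖ - ξm ω * ‖y - τ • e ω‖))
        + (γ ^ 2 * k ^ 2) * ((ξp ω * ‖y + τ • e ω‖ - ξm ω * ‖y - τ • e ω‖) ^ 2)) P :=
      K4.add K5
    have K345 : Integrable (fun ω => (γ ^ 2 * (d:ℝ) ^ 2) * ((inner ℝ (M y) (e ω) : ℝ) ^ 2)
        + ((2 * γ ^ 2 * (d:ℝ) * k) * ((inner ℝ (M y) (e ω) : ℝ)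
            * (ξp ω * ‖y + τ • e ω‖ - ξm ω * ‖y - τ • e ω‖))
          + (γ ^ 2 * k ^ 2) * ((ξp ω * ‖y + τ • e ω‖ - ξm ω * ‖y - τ • e ω‖) ^ 2))) P :=
      K3.add K45
    have K2345 : Integrable (fun ω => (-(2 * γ * k))
          * ((ξp ω * ‖y + τ • e ω‖ - ξm ω * ‖y - τ • e ω‖) * (inner ℝ (e ω) y : ℝ))
        + ((γ ^ 2 * (d:ℝ) ^ 2) * ((inner ℝ (M y) (e ω) : ℝ) ^ 2)
        + ((2 * γ ^ 2 * (d:ℝ) * k) * ((inner ℝ (M y) (e ω) : ℝ)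
            * (ξp ω * ‖y + τ • e ω‖ - ξm ω * ‖y - τ • e ω‖))
          + (γ ^ 2 * k ^ 2) * ((ξp ω * ‖y + τ • e ω‖ - ξm ω * ‖y - τ • e ω‖) ^ 2)))) P :=
      K2.add K345
    have K12345 : Integrable (fun ω => (-(2 * γ * (d:ℝ)))
          * ((inner ℝ (M y) (e ω) : ℝ) * (inner ℝ (e ω) y : ℝ))
        + ((-(2 * γ * k))
          * ((ξp ω * ‖y + τ • e ω‖ - ξm ω * ‖y - τ • e ω‖) * (inner ℝ (e ω) y : ℝ))
        + ((γ ^ 2 * (d:ℝ) ^ 2) * ((inner ℝ (M y) (e ω) : ℝ) ^ 2)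
        + ((2 * γ ^ 2 * (d:ℝ) * k) * ((inner ℝ (M y) (e ω) : ℝ)
            * (ξp ω * ‖y + τ • e ω‖ - ξm ω * ‖y - τ • e ω‖))
          + (γ ^ 2 * k ^ 2) * ((ξp ω * ‖y + τ • e ω‖ - ξm ω * ‖y - τ • e ω‖) ^ 2))))) P :=
      K1.add K2345
    rw [integral_congr_ae hFeq]
    rw [integral_add (integrable_const _) K12345, integral_add K1 K2345,
      integral_add K2 K345, integral_add K3 K45, integral_add K4 K5]
    rw [integral_const_mul, integral_const_mul, integral_const_mul, integral_const_mul,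
      integral_const_mul, integral_const]
    rw [HB1, HB2, HB3, HB4, ← hJ5]
    simp only [measure_univ, probReal_univ, ENNReal.toReal_one, smul_eq_mul, one_mul, mul_zero]
    field_simp
    ring
  -- final arithmetic
  have hτ2 : (0:ℝ) < τ ^ 2 := by positivity
  have hγdL : γ * ((d:ℝ) * L) ≤ 1 / 5 := by
    rw [le_div_iff₀ (by positivity : (0:ℝ) < 5 * (d:ℝ) * L)] at hγ
    linarith
  have t1 : γ ^ 2 * (d:ℝ) * ‖M y‖ ^ 2 ≤ γ * Q / 5 := by
    have h1 : γ ^ 2 * (d:ℝ) * ‖M y‖ ^ 2 ≤ γ ^ 2 * (d:ℝ) * (L * Q) :=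
      mul_le_mul_of_nonneg_left hMyQ (by positivity)
    have h2 : γ * ((d:ℝ) * L) * (γ * Q) ≤ (1/5) * (γ * Q) :=
      mul_le_mul_of_nonneg_right hγdL (by positivity)
    have h3 : γ ^ 2 * (d:ℝ) * (L * Q) = γ * ((d:ℝ) * L) * (γ * Q) := by ring
    linarith
  have hA1 : -(2 * γ * Q) + γ ^ 2 * (d:ℝ) * ‖M y‖ ^ 2 ≤ -(γ * μ * ‖y‖ ^ 2) := by
    have h1 : γ * (μ * ‖y‖ ^ 2) ≤ γ * Q := mul_le_mul_of_nonneg_left hQμ hγ0.le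
    have h2 : 0 ≤ γ * Q := by positivity
    linarith [t1]
  have hA2 : γ ^ 2 * k ^ 2 * J5 ≤ 5 * (d:ℝ) ^ 2 * γ ^ 2 * σ ^ 2 / τ ^ 2 * ‖y‖ ^ 2
      + 5 * (d:ℝ) ^ 2 * γ ^ 2 * σ ^ 2 := by
    have hkτ : k ^ 2 * τ ^ 2 = (d:ℝ) ^ 2 / 4 := by
      rw [hk]; field_simp; ring
    rw [← sub_nonneg]
    have h0 : 0 ≤ (5 * (d:ℝ) ^ 2 * γ ^ 2 * σ ^ 2 / τ ^ 2 * ‖y‖ ^ 2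
        + 5 * (d:ℝ) ^ 2 * γ ^ 2 * σ ^ 2 - γ ^ 2 * k ^ 2 * J5) * τ ^ 2 := by
      have hexpand : (5 * (d:ℝ) ^ 2 * γ ^ 2 * σ ^ 2 / τ ^ 2 * ‖y‖ ^ 2
          + 5 * (d:ℝ) ^ 2 * γ ^ 2 * σ ^ 2 - γ ^ 2 * k ^ 2 * J5) * τ ^ 2
          = 5 * (d:ℝ) ^ 2 * γ ^ 2 * σ ^ 2 * ‖y‖ ^ 2
            + 5 * (d:ℝ) ^ 2 * γ ^ 2 * σ ^ 2 * τ ^ 2 - γ ^ 2 * (k ^ 2 * τ ^ 2) * J5 := by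
        field_simp
      rw [hexpand, hkτ]
      have h1 : γ ^ 2 * ((d:ℝ) ^ 2 / 4) * J5 ≤ γ ^ 2 * ((d:ℝ) ^ 2 / 4)
          * (4 * σ ^ 2 * (‖y‖ + τ) ^ 2) :=
        mul_le_mul_of_nonneg_left HB5 (by positivity)
      have h2 : (‖y‖ + τ) ^ 2 ≤ 2 * ‖y‖ ^ 2 + 2 * τ ^ 2 := by linarith [sq_nonneg (‖y‖ - τ)]
      have h3 : γ ^ 2 * ((d:ℝ) ^ 2 / 4) * (4 * σ ^ 2 * (‖y‖ + τ) ^ 2)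
          = (γ ^ 2 * (d:ℝ) ^ 2 * σ ^ 2) * (‖y‖ + τ) ^ 2 := by ring
      have h4 : (γ ^ 2 * (d:ℝ) ^ 2 * σ ^ 2) * (‖y‖ + τ) ^ 2
          ≤ (γ ^ 2 * (d:ℝ) ^ 2 * σ ^ 2) * (2 * ‖y‖ ^ 2 + 2 * τ ^ 2) :=
        mul_le_mul_of_nonneg_left h2 (by positivity)
      have hm1 : (0:ℝ) ≤ γ ^ 2 * (d:ℝ) ^ 2 * σ ^ 2 * ‖y‖ ^ 2 := by positivity
      have hm2 : (0:ℝ) ≤ γ ^ 2 * (d:ℝ) ^ 2 * σ ^ 2 * τ ^ 2 := by positivity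
      linarith [h1, h3, h4, hm1, hm2]
    have h5 := div_nonneg h0 hτ2.le
    rwa [mul_div_cancel_right₀ _ (ne_of_gt hτ2)] at h5
  rw [key, ← hy]
  have hexpand2 : (1 - γ * μ + 5 * (d:ℝ) ^ 2 * γ ^ 2 * σ ^ 2 / τ ^ 2) * ‖y‖ ^ 2
      + 5 * (d:ℝ) ^ 2 * γ ^ 2 * σ ^ 2
      = ‖y‖ ^ 2 - γ * μ * ‖y‖ ^ 2 + 5 * (d:ℝ) ^ 2 * γ ^ 2 * σ ^ 2 / τ ^ 2 * ‖y‖ ^ 2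
        + 5 * (d:ℝ) ^ 2 * γ ^ 2 * σ ^ 2 := by ring
  rw [hexpand2]
  linarith [hA1, hA2]
end
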